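/- arXiv:1103.1028 — 4 statements merged into one kernel-verified Lean document; each statement's English description precedes it below -/
import Mathlib

section
/- If G is a nontrivial connected triangle-free graph (a connected simple graph with at least two vertices and no triangles), then the competition number of G equals the dimension of the hole space of G plus one, i.e., k(G) = dim H(G) + 1. -/
open SimpleGraph

/-- A digraph (given as a relation) is acyclic if it has no directed cycle,
i.e., no vertex reaches itself by a nonempty directed walk. -/
def DigraphAcyclic {α : Type*} (D : α → α → Prop) : Prop :=
  ∀ a : α, ¬ Relation.TransGen D a a

/-- `G` is the competition graph of the digraph `D`: two distinct vertices are
adjacent iff they have a common out-neighbor. -/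
def IsCompetitionGraphOf {α : Type*} (G : SimpleGraph α) (D : α → α → Prop) : Prop :=
  ∀ x y : α, G.Adj x y ↔ x ≠ y ∧ ∃ v : α, D x v ∧ D y v

/-- The graph `G` together with `k` additional isolated vertices. -/
def addIsolated {V : Type*} (G : SimpleGraph V) (k : ℕ) : SimpleGraph (V ⊕ Fin k) :=
  SimpleGraph.fromRel (fun x y => ∃ a b : V, x = Sum.inl a ∧ y = Sum.inl b ∧ G.Adj a b)

/-- The competition number of `G`: the smallest `k` such that `G` together with
`k` isolated vertices is the competition graph of some acyclic digraph. -/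
noncomputable def competitionNumber {V : Type*} (G : SimpleGraph V) : ℕ :=
  sInf {k : ℕ | ∃ D : (V ⊕ Fin k) → (V ⊕ Fin k) → Prop,
    DigraphAcyclic D ∧ IsCompetitionGraphOf (addIsolated G k) D}

/-- A hole of `G`: an induced (chordless) cycle of length at least 4. -/
def IsHole {V : Type*} (G : SimpleGraph V) {v : V} (w : G.Walk v v) : Prop :=
  w.IsCycle ∧ 4 ≤ w.length ∧
    ∀ x y : V, x ∈ w.support → y ∈ w.support → G.Adj x y → s(x, y) ∈ w.edges

/-- An induced (chordless) cycle of `G`. -/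
def IsInducedCycle {V : Type*} (G : SimpleGraph V) {v : V} (w : G.Walk v v) : Prop :=
  w.IsCycle ∧
    ∀ x y : V, x ∈ w.support → y ∈ w.support → G.Adj x y → s(x, y) ∈ w.edges

open Classical in
/-- The characteristic vector in 𝔽₂^{E(G)} of (the edge set of) a closed walk. -/
noncomputable def cycleVec {V : Type*} (G : SimpleGraph V) {H : SimpleGraph V} {v : V}
    (w : H.Walk v v) : G.edgeSet → ZMod 2 :=
  fun e => if (e : Sym2 V) ∈ w.edges then 1 else 0

/-- The hole space of `G`: the 𝔽₂-span of the characteristic vectors of the holes. -/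
def holeSpace {V : Type*} (G : SimpleGraph V) : Submodule (ZMod 2) (G.edgeSet → ZMod 2) :=
  Submodule.span (ZMod 2)
    {f | ∃ (v : V) (w : G.Walk v v), IsHole G w ∧ f = cycleVec G w}

/-- The dimension of the hole space of `G`. -/
noncomputable def holeDim {V : Type*} (G : SimpleGraph V) : ℕ :=
  Module.finrank (ZMod 2) (holeSpace G)

/-- The edge sets of the holes of `G`; distinct holes correspond to distinct edge sets. -/
def holeEdgeSets {V : Type*} (G : SimpleGraph V) : Set (Set (Sym2 V)) :=
  {E | ∃ (v : V) (w : G.Walk v v), IsHole G w ∧ E = {e | e ∈ w.edges}}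

/-- The edge sets of the induced cycles of `G`. -/
def inducedCycleEdgeSets {V : Type*} (G : SimpleGraph V) : Set (Set (Sym2 V)) :=
  {E | ∃ (v : V) (w : G.Walk v v), IsInducedCycle G w ∧ E = {e | e ∈ w.edges}}

/-- The number of holes of `G`. -/
noncomputable def numHoles {V : Type*} (G : SimpleGraph V) : ℕ :=
  (holeEdgeSets G).ncard

/-- A graph is chordal if it has no holes. -/
def IsChordalGraph {V : Type*} (G : SimpleGraph V) : Prop :=
  ∀ (v : V) (w : G.Walk v v), ¬ IsHole G w


/-! ### Auxiliary development -/

section Aux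

open Finset

lemma zmod2_cases (a : ZMod 2) : a = 0 ∨ a = 1 := by revert a; decide

lemma zmod2_add_self (a : ZMod 2) : a + a = 0 := by revert a; decide

open Classical in
/-- characteristic vector of an arbitrary walk -/
noncomputable def chiW {V : Type*} (G : SimpleGraph V) {H : SimpleGraph V} {u v : V}
    (w : H.Walk u v) : G.edgeSet → ZMod 2 :=
  fun e => if (e : Sym2 V) ∈ w.edges then 1 else 0

lemma cycleVec_eq_chiW {V : Type*} (G : SimpleGraph V) {H : SimpleGraph V} {v : V}
    (w : H.Walk v v) : cycleVec G w = chiW G w := rfl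

open Classical in
/-- delta function at a vertex -/
noncomputable def dl {V : Type*} (x : V) : V → ZMod 2 := fun y => if y = x then 1 else 0

open Classical in
/-- vector of a single edge -/
noncomputable def eVec {V : Type*} (G : SimpleGraph V) (a b : V) : G.edgeSet → ZMod 2 :=
  fun e => if (e : Sym2 V) = s(a, b) then 1 else 0

lemma dl_add_dl_self {V : Type*} (x : V) : dl x + dl x = 0 := by
  funext y; exact zmod2_add_self _

open Classical in
/-- the boundary map -/
noncomputable def bdF {V : Type*} [Fintype V] (G : SimpleGraph V) [Fintype G.edgeSet] :
    (G.edgeSet → ZMod 2) →ₗ[ZMod 2] (V → ZMod 2) where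
  toFun f := fun x => ∑ e : G.edgeSet, (if x ∈ (e : Sym2 V) then 1 else 0) * f e
  map_add' f g := by
    funext x
    simp [mul_add, Finset.sum_add_distrib]
  map_smul' c f := by
    funext x
    simp only [Pi.smul_apply, smul_eq_mul, RingHom.id_apply, Finset.mul_sum]
    congr 1; funext e; ring

lemma bdF_single {V : Type*} [Fintype V] (G : SimpleGraph V) [Fintype G.edgeSet]
    {u w : V} (h : G.Adj u w) :
    bdF G (eVec G u w) = dl u + dl w := by
  classical
  funext x
  have hE0 : s(u, w) ∈ G.edgeSet := h
  simp only [bdF, eVec, LinearMap.coe_mk, AddHom.coe_mk]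
  rw [Finset.sum_eq_single (⟨s(u, w), hE0⟩ : G.edgeSet)]
  · have hcoe : ((⟨s(u, w), hE0⟩ : G.edgeSet) : Sym2 V) = s(u, w) := rfl
    rw [hcoe, if_pos rfl, mul_one]
    simp only [Sym2.mem_iff, Pi.add_apply, dl]
    by_cases hx : x = u
    · subst hx
      rw [if_pos (Or.inl rfl), if_pos rfl, if_neg (fun hxw => h.ne hxw), add_zero]
    · by_cases hx' : x = w
      · subst hx'
        rw [if_pos (Or.inr rfl), if_pos rfl, if_neg hx, zero_add]
      · rw [if_neg (by tauto), if_neg hx, if_neg hx']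
        norm_num
  · intro e _ hne
    have : (e : Sym2 V) ≠ s(u, w) := fun hh => hne (Subtype.ext hh)
    rw [if_neg this, mul_zero]
  · intro hmem
    exact absurd (Finset.mem_univ _) hmem

lemma chiW_nil {V : Type*} (G : SimpleGraph V) {H : SimpleGraph V} {u : V} :
    chiW G (SimpleGraph.Walk.nil : H.Walk u u) = 0 := by
  funext e; simp [chiW]

lemma chiW_cons {V : Type*} (G : SimpleGraph V) {H : SimpleGraph V} {u v w : V}
    (h : H.Adj u v) (p : H.Walk v w) (hup : s(u, v) ∉ p.edges) :
    chiW G (SimpleGraph.Walk.cons h p) = eVec G u v + chiW G p := by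
  classical
  funext e
  simp only [chiW, eVec, SimpleGraph.Walk.edges_cons, List.mem_cons, Pi.add_apply]
  by_cases h1 : (e : Sym2 V) = s(u, v)
  · rw [if_pos (Or.inl h1), if_pos h1, if_neg (h1 ▸ hup), add_zero]
  · rw [if_neg h1, zero_add, if_congr (by tauto) rfl rfl]

lemma bdF_chiW {V : Type*} [Fintype V] (G : SimpleGraph V) [Fintype G.edgeSet]
    {u v : V} (w : G.Walk u v) (hw : w.IsTrail) :
    bdF G (chiW G w) = dl u + dl v := by
  induction w with
  | nil => rw [chiW_nil, map_zero, dl_add_dl_self]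
  | @cons a b c h p ih =>
    rw [SimpleGraph.Walk.isTrail_cons] at hw
    rw [chiW_cons G h p hw.2, map_add, bdF_single G h, ih hw.1]
    funext y
    simp only [Pi.add_apply]
    have hb := zmod2_add_self ((dl b) y)
    rw [add_assoc, ← add_assoc (dl b y), hb, zero_add]

lemma bdF_chiW_closed {V : Type*} [Fintype V] (G : SimpleGraph V) [Fintype G.edgeSet]
    {v : V} (w : G.Walk v v) (hw : w.IsTrail) :
    bdF G (chiW G w) = 0 := by
  rw [bdF_chiW G w hw, dl_add_dl_self]

end Aux


section Aux2

open Finset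

open Classical in
/-- sum-of-coordinates functional -/
noncomputable def sumF (V : Type*) [Fintype V] : (V → ZMod 2) →ₗ[ZMod 2] ZMod 2 where
  toFun g := ∑ x : V, g x
  map_add' f g := by simp [Finset.sum_add_distrib]
  map_smul' c f := by simp [Finset.mul_sum]

lemma sumF_dl {V : Type*} [Fintype V] (x : V) : sumF V (dl x) = 1 := by
  classical
  simp [sumF, dl]

lemma sumF_bdF {V : Type*} [Fintype V] (G : SimpleGraph V) [Fintype G.edgeSet]
    (f : G.edgeSet → ZMod 2) : sumF V (bdF G f) = 0 := by
  classical
  simp only [sumF, bdF, LinearMap.coe_mk, AddHom.coe_mk]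
  rw [Finset.sum_comm]
  apply Finset.sum_eq_zero
  intro e _
  rw [← Finset.sum_mul]
  have : (∑ x : V, if x ∈ (e : Sym2 V) then (1 : ZMod 2) else 0) = 0 := by
    obtain ⟨e, he⟩ := e
    induction e with
    | _ a b =>
      have hab : a ≠ b := by
        intro hh
        exact G.not_isDiag_of_mem_edgeSet he (by simp [hh])
      rw [Finset.sum_boole]
      have : Finset.filter (fun x => x ∈ s(a, b)) Finset.univ = {a, b} := by
        ext x; simp [Sym2.mem_iff]
      rw [this, Finset.card_insert_of_notMem (by simp [hab]), Finset.card_singleton]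
      decide
  rw [this, zero_mul]

lemma range_bdF {V : Type*} [Fintype V] (G : SimpleGraph V) [Fintype G.edgeSet]
    (hconn : G.Connected) :
    LinearMap.range (bdF G) = LinearMap.ker (sumF V) := by
  classical
  apply le_antisymm
  · rintro g ⟨f, rfl⟩
    exact sumF_bdF G f
  · intro g hg
    rw [LinearMap.mem_ker] at hg
    set S : Finset V := Finset.univ.filter (fun x => g x = 1) with hS
    have hgS : g = ∑ v ∈ S, dl v := by
      funext x
      rw [Finset.sum_apply]
      have : ∀ v ∈ S, dl v x = if x = v then 1 else 0 := fun v _ => by simp [dl]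
      rw [Finset.sum_congr rfl this, Finset.sum_ite_eq S x (fun _ => 1)]
      by_cases hx : g x = 1
      · rw [if_pos (by simp [hS, hx]), hx]
      · have hx0 : g x = 0 := (zmod2_cases (g x)).resolve_right hx
        rw [if_neg (by simp [hS, hx]), hx0]
    have hsum : (S.card : ZMod 2) = 0 := by
      have h1 : ∑ x : V, g x = 0 := hg
      have h2 : ∑ x : V, g x = ∑ x ∈ S, g x := by
        rw [Finset.sum_filter_of_ne]
        intro x _ hx
        have := zmod2_cases (g x); tauto
      have h3 : ∑ x ∈ S, g x = (S.card : ZMod 2) := by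
        rw [Finset.sum_congr rfl (fun x hx => (Finset.mem_filter.mp hx).2)]
        simp [Finset.sum_const, nsmul_eq_mul, hS]
      rw [h2, h3] at h1; exact h1
    have hEven : Even S.card := by
      rw [ZMod.natCast_eq_zero_iff] at hsum
      obtain ⟨c, hc⟩ := hsum
      exact ⟨c, by omega⟩
    rcases Finset.eq_empty_or_nonempty S with hSe | ⟨v0, hv0⟩
    · have : g = 0 := by rw [hgS, hSe, Finset.sum_empty]
      rw [this]; exact zero_mem _
    · have key : g = ∑ v ∈ S, (dl v + dl v0) := by
        rw [Finset.sum_add_distrib, Finset.sum_const, ← hgS]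
        obtain ⟨l, hl⟩ := hEven
        rw [hl, add_nsmul]
        have hz : l • dl v0 + l • dl v0 = 0 := by funext y; exact zmod2_add_self _
        rw [hz, add_zero]
      rw [key]
      apply Submodule.sum_mem
      intro v hv
      obtain ⟨w⟩ := hconn.preconnected v0 v
      refine ⟨chiW G (w.toPath : G.Walk v0 v), ?_⟩
      rw [bdF_chiW G _ (w.toPath.2.isTrail)]
      exact add_comm (dl v0) (dl v)

end Aux2


section Aux3

lemma finrank_ker_sumF {V : Type*} [Fintype V] [Nonempty V] :
    Module.finrank (ZMod 2) (LinearMap.ker (sumF V)) + 1 = Fintype.card V := by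
  have hsurj : Function.Surjective (sumF V) := by
    intro c
    refine ⟨c • dl (Classical.arbitrary V), ?_⟩
    rw [map_smul, sumF_dl, smul_eq_mul, mul_one]
  have hrn := LinearMap.finrank_range_add_finrank_ker (sumF V)
  rw [Module.finrank_pi, LinearMap.range_eq_top.2 hsurj, finrank_top,
    Module.finrank_self] at hrn
  omega

lemma finrank_ker_bdF {V : Type*} [Fintype V] [Nonempty V] (G : SimpleGraph V)
    [Fintype G.edgeSet] (hconn : G.Connected) :
    Module.finrank (ZMod 2) (LinearMap.ker (bdF G)) + Fintype.card V =
      Fintype.card G.edgeSet + 1 := by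
  have hrn := LinearMap.finrank_range_add_finrank_ker (bdF G)
  rw [Module.finrank_pi, range_bdF G hconn] at hrn
  have h2 := finrank_ker_sumF (V := V)
  omega

lemma card_edge_lower {V : Type*} [Fintype V] [Nonempty V] (G : SimpleGraph V)
    [Fintype G.edgeSet] (hconn : G.Connected) :
    Fintype.card V ≤ Fintype.card G.edgeSet + 1 := by
  have := finrank_ker_bdF G hconn
  omega

end Aux3


section Aux4

open SimpleGraph.Walk

lemma three_cycle_false {V : Type*} {G : SimpleGraph V} {v : V} {c : G.Walk v v}
    (hc : c.IsCycle) (hlen : c.length = 3) (htf : G.CliqueFree 3) : False := by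
  classical
  cases c with
  | nil => simp at hlen
  | cons h1 q =>
    rename_i a
    cases q with
    | nil => simp at hlen
    | cons h2 q2 =>
      rename_i b
      cases q2 with
      | nil => simp at hlen
      | cons h3 q3 =>
        cases q3 with
        | nil =>
          have hnd := hc.2
          simp only [SimpleGraph.Walk.support_cons, SimpleGraph.Walk.support_nil,
            List.tail_cons, List.nodup_cons, List.mem_cons, List.mem_singleton,
            List.not_mem_nil] at hnd
          exact htf {v, a, b} (SimpleGraph.is3Clique_triple_iff.mpr ⟨h1, h3.symm, h2⟩)
        | cons h4 q4 => simp [SimpleGraph.Walk.length_cons] at hlen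

lemma mem_support_tail_of_closed {V : Type*} {G : SimpleGraph V} {w : V}
    (d : G.Walk w w) (hd : ¬ d.Nil) {z : V} (hz : z ∈ d.support) :
    z ∈ d.support.tail := by
  obtain ⟨u, h, q, rfl⟩ := SimpleGraph.Walk.not_nil_iff.mp hd
  rw [SimpleGraph.Walk.support_cons] at hz ⊢
  rw [List.tail_cons]
  rcases List.mem_cons.mp hz with rfl | hz
  · exact q.end_mem_support
  · exact hz

lemma cycle_mem_holeSpace_aux {V : Type*} {G : SimpleGraph V}
    (htf : G.CliqueFree 3) :
    ∀ N : ℕ, ∀ (v : V) (c : G.Walk v v), c.IsCycle → c.length ≤ N →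
      cycleVec G c ∈ holeSpace G := by
  classical
  intro N
  induction N with
  | zero =>
    intro v c hc hl
    exact absurd hc.three_le_length (by omega)
  | succ N ih =>
    intro v c hc hl
    by_cases hch : ∀ x y, x ∈ c.support → y ∈ c.support → G.Adj x y → s(x, y) ∈ c.edges
    · -- c is an induced cycle, hence (triangle-freeness) a hole
      have h3 := hc.three_le_length
      have h4 : 4 ≤ c.length := by
        rcases Nat.lt_or_ge c.length 4 with hlt | hge
        · exact absurd (three_cycle_false hc (by omega) htf) (fun h => h)
        · exact hge
      exact Submodule.subset_span ⟨v, c, ⟨hc, h4, hch⟩, rfl⟩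
    · push_neg at hch
      obtain ⟨x, y, hx, hy, hadj, hchord⟩ := hch
      have hxy : x ≠ y := hadj.ne
      have hcnn : ¬ c.Nil := hc.not_nil
      -- rotate the cycle to start at x
      have hc1cyc : (c.rotate x hx).IsCycle := hc.rotate hx
      have hedgesmem : ∀ e, e ∈ (c.rotate x hx).edges ↔ e ∈ c.edges :=
        fun e => (c.rotate_edges x hx).mem_iff
      have hlenrot : (c.rotate x hx).length = c.length := by
        unfold SimpleGraph.Walk.rotate
        have := congrArg SimpleGraph.Walk.length (c.take_spec hx)
        rw [SimpleGraph.Walk.length_append] at this ⊢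
        omega
      obtain ⟨x2, h0, t, ht⟩ := SimpleGraph.Walk.not_nil_iff.mp hc1cyc.not_nil
      have h01 : t.IsPath ∧ s(x, x2) ∉ t.edges :=
        (SimpleGraph.Walk.cons_isCycle_iff t h0).mp (ht ▸ hc1cyc)
      -- y is in the support of t
      have hyc1 : y ∈ (c.rotate x hx).support := by
        have h1 : y ∈ c.support.tail := mem_support_tail_of_closed c hcnn hy
        have h2 : y ∈ (c.rotate x hx).support.tail := (c.support_rotate x hx).mem_iff.mpr h1
        rw [SimpleGraph.Walk.support_eq_cons] at *
        exact List.mem_cons_of_mem _ h2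
      have hyt : y ∈ t.support := by
        rw [ht, SimpleGraph.Walk.support_cons] at hyc1
        rcases List.mem_cons.mp hyc1 with rfl | h
        · exact absurd rfl hxy
        · exact h
      have hx2y : x2 ≠ y := by
        rintro rfl
        exact hchord ((hedgesmem _).mp (by rw [ht]; simp))
      set pt := t.takeUntil y hyt with hpt
      set qt := t.dropUntil y hyt with hqt
      have hspec : pt.append qt = t := t.take_spec hyt
      have hptp : pt.IsPath := h01.1.takeUntil hyt
      have hqtp : qt.IsPath := h01.1.dropUntil hyt
      have hxnpt : x ∉ pt.support := by
        have hnd : (pt.support ++ qt.support.tail).Nodup := by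
          rw [← SimpleGraph.Walk.support_append, hspec]
          exact h01.1.2
        have hxq : x ∈ qt.support.tail := by
          have h1 : x ∈ qt.support := qt.end_mem_support
          rw [SimpleGraph.Walk.support_eq_cons] at h1
          rcases List.mem_cons.mp h1 with rfl | h
          · exact absurd rfl hxy
          · exact h
        exact fun hxp => (List.disjoint_of_nodup_append hnd) hxp hxq
      have hchc1 : s(x, y) ∉ (c.rotate x hx).edges := fun hh => hchord ((hedgesmem _).mp hh)
      have hchordt : s(x, y) ∉ t.edges := fun hh => hchc1 (by rw [ht]; simp [hh])
      have hchpt : s(x, y) ∉ pt.edges := fun hh => hchordt (t.edges_takeUntil_subset hyt hh)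
      have hchqt : s(x, y) ∉ qt.edges := fun hh => hchordt (t.edges_dropUntil_subset hyt hh)
      have hxx2ch : s(x, x2) ≠ s(x, y) := fun hh => hx2y (Sym2.congr_right.mp hh)
      -- the two smaller cycles
      set cyc1 : G.Walk y y := SimpleGraph.Walk.cons hadj.symm (SimpleGraph.Walk.cons h0 pt)
        with hcyc1def
      set cyc2 : G.Walk x x := SimpleGraph.Walk.cons hadj qt with hcyc2def
      have hcyc1 : cyc1.IsCycle := by
        rw [hcyc1def, SimpleGraph.Walk.cons_isCycle_iff]
        constructor
        · rw [SimpleGraph.Walk.cons_isPath_iff]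
          exact ⟨hptp, hxnpt⟩
        · rw [SimpleGraph.Walk.edges_cons]
          intro hcontra
          rcases List.mem_cons.mp hcontra with h | h
          · rw [Sym2.eq_swap] at h
            exact hxx2ch h.symm
          · rw [Sym2.eq_swap] at h
            exact hchpt h
      have hcyc2 : cyc2.IsCycle :=
        (SimpleGraph.Walk.cons_isCycle_iff qt hadj).mpr ⟨hqtp, hchqt⟩
      -- length bookkeeping
      have hlsplit : t.length = pt.length + qt.length := by
        have := congrArg SimpleGraph.Walk.length hspec
        rw [SimpleGraph.Walk.length_append] at this
        omega
      have hlt : c.length = t.length + 1 := by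
        rw [← hlenrot, ht, SimpleGraph.Walk.length_cons]
      have hqt2 : 2 ≤ qt.length := by
        have hqnn : ¬ qt.Nil := SimpleGraph.Walk.not_nil_of_ne hxy.symm
        obtain ⟨u1, hadj1, q1, hq1⟩ := SimpleGraph.Walk.not_nil_iff.mp hqnn
        cases q1 with
        | nil =>
          exfalso
          apply hchqt
          rw [hq1, SimpleGraph.Walk.edges_cons, Sym2.eq_swap]
          simp
        | cons h2' q2' =>
          rw [hq1]
          simp only [SimpleGraph.Walk.length_cons]
          omega
      have hpt1 : 1 ≤ pt.length := by
        have : ¬ pt.Nil := SimpleGraph.Walk.not_nil_of_ne hx2y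
        rw [SimpleGraph.Walk.not_nil_iff_lt_length] at this
        omega
      have hlc1 : cyc1.length = pt.length + 2 := by
        rw [hcyc1def]; simp [SimpleGraph.Walk.length_cons]
      have hlc2 : cyc2.length = qt.length + 1 := by
        rw [hcyc2def]; simp [SimpleGraph.Walk.length_cons]
      -- membership in the hole space via induction
      have hm1 : cycleVec G cyc1 ∈ holeSpace G := ih y cyc1 hcyc1 (by omega)
      have hm2 : cycleVec G cyc2 ∈ holeSpace G := ih x cyc2 hcyc2 (by omega)
      -- the vector identity
      have hvec : cycleVec G c = cycleVec G cyc1 + cycleVec G cyc2 := by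
        have hce : ∀ e : Sym2 V,
            e ∈ c.edges ↔ e = s(x, x2) ∨ e ∈ pt.edges ∨ e ∈ qt.edges := by
          intro e
          rw [← hedgesmem, ht, SimpleGraph.Walk.edges_cons, ← hspec,
            SimpleGraph.Walk.edges_append]
          simp [List.mem_cons, List.mem_append]
        have hnd : ((s(x, x2) :: (pt.edges ++ qt.edges)) : List (Sym2 V)).Nodup := by
          have hh := hc1cyc.isCircuit.isTrail.edges_nodup
          rw [ht, SimpleGraph.Walk.edges_cons, ← hspec,
            SimpleGraph.Walk.edges_append] at hh
          exact hh
        have hnd1 := List.nodup_cons.mp hnd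
        have hxpq := hnd1.1
        have hnd2 := List.nodup_append.mp hnd1.2
        have hdisj : ∀ e, e ∈ pt.edges → e ∈ qt.edges → False :=
          fun e h1 h2 => hnd2.2.2 e h1 e h2 rfl
        have cyc1edges : cyc1.edges = s(y, x) :: s(x, x2) :: pt.edges := by
          rw [hcyc1def]; simp [SimpleGraph.Walk.edges_cons]
        have cyc2edges : cyc2.edges = s(x, y) :: qt.edges := by
          rw [hcyc2def]; simp [SimpleGraph.Walk.edges_cons]
        funext e
        simp only [cycleVec, Pi.add_apply]
        by_cases hech : (e : Sym2 V) = s(x, y)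
        · have h1 : (e : Sym2 V) ∉ c.edges := hech ▸ hchord
          have h2 : (e : Sym2 V) ∈ cyc1.edges := by
            rw [cyc1edges]
            exact List.mem_cons.mpr (Or.inl (by rw [hech, Sym2.eq_swap]))
          have h3 : (e : Sym2 V) ∈ cyc2.edges := by
            rw [cyc2edges]
            exact List.mem_cons.mpr (Or.inl hech)
          rw [if_neg h1, if_pos h2, if_pos h3]
          decide
        · by_cases h1 : (e : Sym2 V) = s(x, x2)
          · have hin : (e : Sym2 V) ∈ c.edges := (hce _).mpr (Or.inl h1)
            have h2 : (e : Sym2 V) ∈ cyc1.edges := by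
              rw [cyc1edges]
              exact List.mem_cons.mpr (Or.inr (List.mem_cons.mpr (Or.inl h1)))
            have h3 : (e : Sym2 V) ∉ cyc2.edges := by
              rw [cyc2edges]
              simp only [List.mem_cons]
              rintro (h | h)
              · exact hech h
              · exact hxpq (List.mem_append.mpr (Or.inr (h1 ▸ h)))
            rw [if_pos hin, if_pos h2, if_neg h3]
            decide
          · by_cases h2 : (e : Sym2 V) ∈ pt.edges
            · have hin : (e : Sym2 V) ∈ c.edges := (hce _).mpr (Or.inr (Or.inl h2))
              have hc1m : (e : Sym2 V) ∈ cyc1.edges := by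
                rw [cyc1edges]
                exact List.mem_cons.mpr (Or.inr (List.mem_cons.mpr (Or.inr h2)))
              have hc2m : (e : Sym2 V) ∉ cyc2.edges := by
                rw [cyc2edges]
                simp only [List.mem_cons]
                rintro (h | h)
                · exact hech h
                · exact hdisj _ h2 h
              rw [if_pos hin, if_pos hc1m, if_neg hc2m]
              decide
            · by_cases h3 : (e : Sym2 V) ∈ qt.edges
              · have hin : (e : Sym2 V) ∈ c.edges := (hce _).mpr (Or.inr (Or.inr h3))
                have hc1m : (e : Sym2 V) ∉ cyc1.edges := by
                  rw [cyc1edges]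
                  simp only [List.mem_cons]
                  rintro (h | h | h)
                  · rw [Sym2.eq_swap] at h
                    exact hech h
                  · exact h1 h
                  · exact h2 h
                have hc2m : (e : Sym2 V) ∈ cyc2.edges := by
                  rw [cyc2edges]
                  exact List.mem_cons.mpr (Or.inr h3)
                rw [if_pos hin, if_neg hc1m, if_pos hc2m]
                decide
              · have hin : (e : Sym2 V) ∉ c.edges := by
                  rw [hce]
                  rintro (h | h | h)
                  · exact h1 h
                  · exact h2 h
                  · exact h3 h
                have hc1m : (e : Sym2 V) ∉ cyc1.edges := by
                  rw [cyc1edges]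
                  simp only [List.mem_cons]
                  rintro (h | h | h)
                  · rw [Sym2.eq_swap] at h
                    exact hech h
                  · exact h1 h
                  · exact h2 h
                have hc2m : (e : Sym2 V) ∉ cyc2.edges := by
                  rw [cyc2edges]
                  simp only [List.mem_cons]
                  rintro (h | h)
                  · exact hech h
                  · exact h3 h
                rw [if_neg hin, if_neg hc1m, if_neg hc2m]
                decide
      rw [hvec]
      exact add_mem hm1 hm2

end Aux4


section Aux5

lemma exists_cycle_of_even_degree {V : Type*} [Fintype V] [DecidableEq V]
    (H : SimpleGraph V) [DecidableRel H.Adj]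
    (hne : H.edgeSet.Nonempty) (hdeg : ∀ x, Even (H.degree x)) :
    ∃ (v : V) (c : H.Walk v v), c.IsCycle := by
  classical
  set L : Set ℕ := {l | ∃ (u v : V) (p : H.Walk u v), p.IsPath ∧ p.length = l} with hL
  obtain ⟨e0, he0⟩ := hne
  induction e0 with
  | _ a b =>
    have hab : H.Adj a b := he0
    have hL1 : 1 ∈ L := by
      refine ⟨a, b, SimpleGraph.Walk.cons hab SimpleGraph.Walk.nil, ?_, rfl⟩
      rw [SimpleGraph.Walk.cons_isPath_iff]
      exact ⟨SimpleGraph.Walk.IsPath.nil, by simp [hab.ne]⟩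
    have hbdd : BddAbove L := by
      refine ⟨Fintype.card V, ?_⟩
      rintro l ⟨u, v, p, hp, rfl⟩
      have := hp.length_lt
      omega
    have hmem := Nat.sSup_mem ⟨1, hL1⟩ hbdd
    obtain ⟨u, v, p, hp, hl⟩ := hmem
    have hsup1 : 1 ≤ sSup L := le_csSup hbdd hL1
    have hpnil : ¬ p.Nil := by
      rw [SimpleGraph.Walk.not_nil_iff_lt_length]; omega
    have hrevlen : p.reverse.length = p.length := SimpleGraph.Walk.length_reverse p
    have hrev : ¬ p.reverse.Nil := by
      rw [SimpleGraph.Walk.not_nil_iff_lt_length]; omega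
    obtain ⟨y, hvy, q, hq⟩ := SimpleGraph.Walk.not_nil_iff.mp hrev
    have hprev : p.reverse.IsPath := hp.reverse
    have hqpath : q.IsPath ∧ v ∉ q.support := by
      rw [hq, SimpleGraph.Walk.cons_isPath_iff] at hprev
      exact hprev
    have hprev' : p.reverse.IsPath := hp.reverse
    have hdv : 2 ≤ H.degree v := by
      have h1 : y ∈ H.neighborFinset v := by
        rw [SimpleGraph.mem_neighborFinset]; exact hvy
      have h0 : H.degree v ≠ 0 := by
        intro h0
        rw [← SimpleGraph.card_neighborFinset_eq_degree, Finset.card_eq_zero] at h0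
        rw [h0] at h1
        exact Finset.notMem_empty y h1
      obtain ⟨c, hc⟩ := hdeg v
      omega
    obtain ⟨w', hw'mem, hw'ne⟩ : ∃ w' ∈ H.neighborFinset v, w' ≠ y := by
      apply Finset.exists_mem_ne
      rw [SimpleGraph.card_neighborFinset_eq_degree]
      omega
    have hvw : H.Adj v w' := (SimpleGraph.mem_neighborFinset _ _ _).mp hw'mem
    by_cases hws : w' ∈ p.support
    · have hwrev : w' ∈ p.reverse.support := by
        rw [SimpleGraph.Walk.support_reverse]
        exact List.mem_reverse.mpr hws
      set pw := p.reverse.takeUntil w' hwrev with hpw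
      have hpwpath : pw.IsPath := hprev'.takeUntil hwrev
      have hnotedge : s(w', v) ∉ pw.edges := by
        intro hmm
        have hsub : s(w', v) ∈ p.reverse.edges :=
          p.reverse.edges_takeUntil_subset hwrev hmm
        rw [hq, SimpleGraph.Walk.edges_cons] at hsub
        rcases List.mem_cons.mp hsub with h | h
        · rw [Sym2.eq_iff] at h
          rcases h with ⟨h1, h2⟩ | ⟨h1, h2⟩
          · exact hvy.ne h2
          · exact hw'ne h1
        · rw [Sym2.eq_swap] at h
          exact hqpath.2 (q.fst_mem_support_of_mem_edges h)
      exact ⟨w', SimpleGraph.Walk.cons hvw.symm pw,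
        (SimpleGraph.Walk.cons_isCycle_iff pw hvw.symm).mpr ⟨hpwpath, hnotedge⟩⟩
    · exfalso
      have hwrev : w' ∉ p.reverse.support := by
        rw [SimpleGraph.Walk.support_reverse]
        exact fun h => hws (List.mem_reverse.mp h)
      have hnewpath : (SimpleGraph.Walk.cons hvw.symm p.reverse).IsPath :=
        hprev'.cons hwrev
      have : p.length + 1 ∈ L :=
        ⟨w', u, SimpleGraph.Walk.cons hvw.symm p.reverse, hnewpath, by
          rw [SimpleGraph.Walk.length_cons, hrevlen]⟩
      have := le_csSup hbdd this
      omega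

end Aux5


section Aux6

lemma ker_le_holeSpace {V : Type*} [Fintype V] (G : SimpleGraph V) [Fintype G.edgeSet]
    (htf : G.CliqueFree 3) :
    LinearMap.ker (bdF G) ≤ holeSpace G := by
  classical
  suffices h : ∀ (n : ℕ) (f : G.edgeSet → ZMod 2),
      (Finset.univ.filter (fun e => f e ≠ 0)).card ≤ n →
      f ∈ LinearMap.ker (bdF G) → f ∈ holeSpace G by
    intro f hf
    exact h _ f le_rfl hf
  intro n
  induction n with
  | zero =>
    intro f hcard _
    have hf : f = 0 := by
      funext e
      by_contra he
      have : e ∈ Finset.univ.filter (fun e => f e ≠ 0) := by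
        simp only [Finset.mem_filter, Finset.mem_univ, true_and]
        exact he
      rw [Finset.card_eq_zero.mp (Nat.le_zero.mp hcard)] at this
      exact Finset.notMem_empty _ this
    rw [hf]
    exact zero_mem _
  | succ n ih =>
    intro f hcard hker
    by_cases hf0 : f = 0
    · rw [hf0]; exact zero_mem _
    -- the support subgraph
    set Es : Set (Sym2 V) := {e | ∃ h : e ∈ G.edgeSet, f ⟨e, h⟩ ≠ 0} with hEs
    set G' : SimpleGraph V := SimpleGraph.fromEdgeSet Es with hG'
    have hG'le : G' ≤ G := by
      intro a b hab
      rw [hG', SimpleGraph.fromEdgeSet_adj] at hab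
      obtain ⟨⟨h, _⟩, _⟩ := hab
      exact h
    have hG'adj : ∀ a b : V, G'.Adj a b ↔ ∃ h : G.Adj a b, f ⟨s(a, b), h⟩ ≠ 0 := by
      intro a b
      rw [hG', SimpleGraph.fromEdgeSet_adj]
      constructor
      · rintro ⟨⟨h, hf⟩, _⟩
        exact ⟨h, hf⟩
      · rintro ⟨h, hf⟩
        exact ⟨⟨h, hf⟩, h.ne⟩
    letI : DecidableRel G'.Adj := Classical.decRel _
    -- degrees in G' are all even
    have hdeg : ∀ x : V, Even (G'.degree x) := by
      intro x
      have hker' : bdF G f x = 0 := by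
        have := LinearMap.mem_ker.mp hker
        rw [this]; rfl
      have hsum : ∑ e : G.edgeSet, (if x ∈ (e : Sym2 V) then (1 : ZMod 2) else 0) * f e
          = 0 := hker'
      have hstep : ∀ e : G.edgeSet,
          (if x ∈ (e : Sym2 V) then (1 : ZMod 2) else 0) * f e
            = if (x ∈ (e : Sym2 V) ∧ f e ≠ 0) then 1 else 0 := by
        intro e
        rcases zmod2_cases (f e) with h | h
        · rw [h, mul_zero, if_neg (by tauto)]
        · rw [h, mul_one]
          simp
      rw [Finset.sum_congr rfl (fun e _ => hstep e), Finset.sum_boole] at hsum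
      have hdvd : 2 ∣ (Finset.univ.filter
          (fun e : G.edgeSet => x ∈ (e : Sym2 V) ∧ f e ≠ 0)).card := by
        rwa [ZMod.natCast_eq_zero_iff] at hsum
      have hdegeq : G'.degree x = (Finset.univ.filter
          (fun e : G.edgeSet => x ∈ (e : Sym2 V) ∧ f e ≠ 0)).card := by
        rw [← SimpleGraph.card_neighborFinset_eq_degree]
        apply Finset.card_bij
          (i := fun y hy => (⟨s(x, y), ((hG'adj x y).mp
            ((SimpleGraph.mem_neighborFinset _ _ _).mp hy)).choose⟩ : G.edgeSet))
        · intro y hy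
          simp only [Finset.mem_filter, Finset.mem_univ, true_and]
          constructor
          · exact Sym2.mem_mk_left x y
          · exact ((hG'adj x y).mp ((SimpleGraph.mem_neighborFinset _ _ _).mp hy)).choose_spec
        · intro y1 h1 y2 h2 heq
          have : s(x, y1) = s(x, y2) := congrArg Subtype.val heq
          exact Sym2.congr_right.mp this
        · intro e he
          simp only [Finset.mem_filter, Finset.mem_univ, true_and] at he
          obtain ⟨hxe, hfe⟩ := he
          refine ⟨Sym2.Mem.other hxe, ?_, ?_⟩
          · rw [SimpleGraph.mem_neighborFinset, hG'adj]
            have hspec : s(x, Sym2.Mem.other hxe) = (e : Sym2 V) := Sym2.other_spec hxe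
            have hadj : G.Adj x (Sym2.Mem.other hxe) := by
              rw [← SimpleGraph.mem_edgeSet, hspec]
              exact e.2
            refine ⟨hadj, ?_⟩
            have : (⟨s(x, Sym2.Mem.other hxe), hadj⟩ : G.edgeSet) = e :=
              Subtype.ext hspec
            rw [this]
            exact hfe
          · apply Subtype.ext
            exact Sym2.other_spec hxe
      rw [hdegeq]
      obtain ⟨c, hc⟩ := hdvd
      exact ⟨c, by omega⟩
    -- G' has an edge
    have hne : G'.edgeSet.Nonempty := by
      have : ∃ e : G.edgeSet, f e ≠ 0 := by
        by_contra hno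
        push_neg at hno
        exact hf0 (funext fun e => hno e)
      obtain ⟨e0, he0⟩ := this
      refine ⟨e0, ?_⟩
      rw [hG', SimpleGraph.edgeSet_fromEdgeSet]
      exact ⟨⟨e0.2, he0⟩, G.not_isDiag_of_mem_edgeSet e0.2⟩
    -- get a cycle in G'
    obtain ⟨v, c, hc⟩ := exists_cycle_of_even_degree G' hne hdeg
    have hsub : ∀ e ∈ c.edges, e ∈ G.edgeSet :=
      fun e he => SimpleGraph.edgeSet_mono hG'le (c.edges_subset_edgeSet he)
    set ct : G.Walk v v := c.transfer G hsub with hct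
    have hctcyc : ct.IsCycle := hc.transfer hsub
    have hctedges : ct.edges = c.edges := c.edges_transfer hsub
    -- edges of the cycle are in the support of f
    have hsupp : ∀ (e : G.edgeSet), (e : Sym2 V) ∈ ct.edges → f e = 1 := by
      intro e he
      rw [hctedges] at he
      have : (e : Sym2 V) ∈ G'.edgeSet := c.edges_subset_edgeSet he
      rw [hG', SimpleGraph.edgeSet_fromEdgeSet] at this
      obtain ⟨⟨h, hf⟩, _⟩ := this
      have : f ⟨(e : Sym2 V), h⟩ = f e := by congr
      rcases zmod2_cases (f e) with h0 | h1
      · exact absurd (this.trans h0) hf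
      · exact h1
    -- subtract the cycle
    set f' : G.edgeSet → ZMod 2 := f + cycleVec G ct with hf'
    have hcv : ∀ e : G.edgeSet, cycleVec G ct e
        = if (e : Sym2 V) ∈ ct.edges then 1 else 0 := by
      intro e
      rw [cycleVec_eq_chiW]
      rfl
    have hf'val : ∀ e : G.edgeSet,
        f' e = if (e : Sym2 V) ∈ ct.edges then f e + 1 else f e := by
      intro e
      rw [hf', Pi.add_apply, hcv]
      by_cases h : (e : Sym2 V) ∈ ct.edges
      · rw [if_pos h, if_pos h]
      · rw [if_neg h, if_neg h, add_zero]
    have hker' : f' ∈ LinearMap.ker (bdF G) := by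
      rw [hf', LinearMap.mem_ker, map_add, LinearMap.mem_ker.mp hker, zero_add,
        cycleVec_eq_chiW]
      exact bdF_chiW_closed G ct hctcyc.isCircuit.isTrail
    -- support strictly decreases
    have hss : (Finset.univ.filter (fun e => f' e ≠ 0))
        ⊂ (Finset.univ.filter (fun e => f e ≠ 0)) := by
      constructor
      · intro e he
        simp only [Finset.mem_filter, Finset.mem_univ, true_and] at he ⊢
        rw [hf'val] at he
        by_cases h : (e : Sym2 V) ∈ ct.edges
        · rw [if_pos h, hsupp e h] at he
          exact absurd (by decide) he
        · rwa [if_neg h] at he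
      · intro hsub'
        -- an edge of the cycle is in supp f but not supp f'
        have hnenil : ct.edges ≠ [] := by
          have h3 := hctcyc.three_le_length
          intro hnil
          have := SimpleGraph.Walk.length_edges ct
          rw [hnil] at this
          simp at this
          omega
        obtain ⟨e1, he1⟩ := List.exists_mem_of_ne_nil _ hnenil
        have he1G : e1 ∈ G.edgeSet := ct.edges_subset_edgeSet he1
        have h1 : (⟨e1, he1G⟩ : G.edgeSet) ∈ Finset.univ.filter (fun e => f e ≠ 0) := by
          simp only [Finset.mem_filter, Finset.mem_univ, true_and]
          rw [hsupp ⟨e1, he1G⟩ he1]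
          decide
        have h2 : (⟨e1, he1G⟩ : G.edgeSet) ∉ Finset.univ.filter (fun e => f' e ≠ 0) := by
          simp only [Finset.mem_filter, Finset.mem_univ, true_and, not_not]
          rw [hf'val, if_pos he1, hsupp ⟨e1, he1G⟩ he1]
          decide
        exact h2 (hsub' h1)
    have hcard' : (Finset.univ.filter (fun e => f' e ≠ 0)).card ≤ n := by
      have := Finset.card_lt_card hss
      omega
    have hf'mem : f' ∈ holeSpace G := ih f' hcard' hker'
    have hcyc : cycleVec G ct ∈ holeSpace G :=
      cycle_mem_holeSpace_aux htf ct.length v ct hctcyc le_rfl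
    have : f = f' + cycleVec G ct := by
      rw [hf']
      funext e
      simp only [Pi.add_apply]
      rw [add_assoc, zmod2_add_self, add_zero]
    rw [this]
    exact add_mem hf'mem hcyc

end Aux6


section Aux7

lemma holeSpace_eq_ker {V : Type*} [Fintype V] (G : SimpleGraph V) [Fintype G.edgeSet]
    (htf : G.CliqueFree 3) :
    holeSpace G = LinearMap.ker (bdF G) := by
  apply le_antisymm
  · rw [holeSpace, Submodule.span_le]
    rintro fv ⟨v, w, hw, rfl⟩
    rw [SetLike.mem_coe, LinearMap.mem_ker, cycleVec_eq_chiW]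
    exact bdF_chiW_closed G w hw.1.isCircuit.isTrail
  · exact ker_le_holeSpace G htf

lemma holeDim_eq {V : Type*} [Fintype V] [Nonempty V] (G : SimpleGraph V)
    [Fintype G.edgeSet] (hconn : G.Connected) (htf : G.CliqueFree 3) :
    holeDim G + Fintype.card V = Fintype.card G.edgeSet + 1 := by
  rw [holeDim, holeSpace_eq_ker G htf]
  exact finrank_ker_bdF G hconn

lemma comp_lower {V : Type*} [Fintype V] (G : SimpleGraph V) [Fintype G.edgeSet]
    (htf : G.CliqueFree 3) (hnt : Nontrivial V) {k : ℕ}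
    {D : (V ⊕ Fin k) → (V ⊕ Fin k) → Prop} (hD : DigraphAcyclic D)
    (hC : IsCompetitionGraphOf (addIsolated G k) D) :
    Fintype.card G.edgeSet + 2 ≤ Fintype.card V + k := by
  classical
  haveI : Nontrivial V := hnt
  -- adjacency from common prey
  have hadj_of : ∀ p q : V, p ≠ q → ∀ w, D (Sum.inl p) w → D (Sum.inl q) w → G.Adj p q := by
    intro p q hpq w h1 h2
    have : (addIsolated G k).Adj (Sum.inl p) (Sum.inl q) :=
      (hC _ _).mpr ⟨by simpa using hpq, w, h1, h2⟩
    rw [addIsolated, SimpleGraph.fromRel_adj] at this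
    obtain ⟨-, h | h⟩ := this
    · obtain ⟨a, b, ha, hb, hab⟩ := h
      cases ha; cases hb
      exact hab
    · obtain ⟨a, b, ha, hb, hab⟩ := h
      cases ha; cases hb
      exact hab.symm
  -- well-foundedness of D
  haveI : IsTrans (V ⊕ Fin k) (Relation.TransGen D) := ⟨fun _ _ _ => Relation.TransGen.trans⟩
  haveI : IsIrrefl (V ⊕ Fin k) (Relation.TransGen D) := ⟨hD⟩
  have hwf : WellFounded (Relation.TransGen D) :=
    Finite.wellFounded_of_trans_of_irrefl _
  have hwfD : WellFounded D := Subrelation.wf (fun h => Relation.TransGen.single h) hwf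
  -- two vertices with too few in-neighbors
  obtain ⟨w1, -, hw1⟩ := hwfD.has_min Set.univ ⟨Sum.inl (Classical.arbitrary V), trivial⟩
  have hw1' : ∀ x, ¬ D x w1 := fun x hx => hw1 x trivial hx
  obtain ⟨a0, b0, hab0⟩ := hnt
  have hne2 : ({w | w ≠ w1} : Set (V ⊕ Fin k)).Nonempty := by
    by_cases h : Sum.inl a0 = w1
    · exact ⟨Sum.inl b0, by simp [h ▸ (by simpa using hab0 : (Sum.inl a0 : V ⊕ Fin k) ≠ Sum.inl b0).symm]⟩
    · exact ⟨Sum.inl a0, h⟩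
  obtain ⟨w2, hw2mem, hw2⟩ := hwfD.has_min {w | w ≠ w1} hne2
  have hw2' : ∀ x, D x w2 → x = w1 := by
    intro x hx
    by_contra hne
    exact hw2 x hne hx
  -- prey map
  have hprey : ∀ e : G.edgeSet, ∃ w : V ⊕ Fin k, ∃ a b : V,
      (e : Sym2 V) = s(a, b) ∧ a ≠ b ∧ D (Sum.inl a) w ∧ D (Sum.inl b) w := by
    intro e
    obtain ⟨q, hq⟩ := e
    induction q with
    | _ a b =>
      have hab : G.Adj a b := hq
      have : (addIsolated G k).Adj (Sum.inl a) (Sum.inl b) := by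
        rw [addIsolated, SimpleGraph.fromRel_adj]
        exact ⟨by simpa using hab.ne, Or.inl ⟨a, b, rfl, rfl, hab⟩⟩
      obtain ⟨-, w, h1, h2⟩ := (hC _ _).mp this
      exact ⟨w, a, b, rfl, hab.ne, h1, h2⟩
  set φ : G.edgeSet → (V ⊕ Fin k) := fun e => (hprey e).choose with hφ
  have hφspec : ∀ e : G.edgeSet, ∃ a b : V,
      (e : Sym2 V) = s(a, b) ∧ a ≠ b ∧ D (Sum.inl a) (φ e) ∧ D (Sum.inl b) (φ e) :=
    fun e => (hprey e).choose_spec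
  -- injectivity
  have hinj : Function.Injective φ := by
    intro e1 e2 heq
    by_contra hne
    obtain ⟨a1, b1, he1, hab1, hd1a, hd1b⟩ := hφspec e1
    obtain ⟨a2, b2, he2, hab2, hd2a, hd2b⟩ := hφspec e2
    rw [heq] at hd1a hd1b
    have hadj1 : G.Adj a1 b1 := by
      rw [← SimpleGraph.mem_edgeSet, ← he1]; exact e1.2
    have tri : ∀ c : V, c ≠ a1 → c ≠ b1 → D (Sum.inl c) (φ e2) → False := by
      intro c hca hcb hdc
      exact htf {a1, b1, c} (SimpleGraph.is3Clique_triple_iff.mpr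
        ⟨hadj1, hadj_of a1 c (Ne.symm hca) _ hd1a hdc,
          hadj_of b1 c (Ne.symm hcb) _ hd1b hdc⟩)
    by_cases h2a : a2 = a1 ∨ a2 = b1
    · by_cases h2b : b2 = a1 ∨ b2 = b1
      · apply hne
        apply Subtype.ext
        rw [he1, he2]
        rcases h2a with rfl | rfl <;> rcases h2b with rfl | rfl
        · exact absurd rfl hab2
        · rfl
        · rw [Sym2.eq_swap]
        · exact absurd rfl hab2
      · push_neg at h2b
        exact tri b2 h2b.1 h2b.2 hd2b
    · push_neg at h2a
      exact tri a2 h2a.1 h2a.2 hd2a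
  -- φ misses w1 and w2
  have hmiss : ∀ e : G.edgeSet, φ e ≠ w1 ∧ φ e ≠ w2 := by
    intro e
    obtain ⟨a, b, he, hab, hda, hdb⟩ := hφspec e
    constructor
    · intro h
      exact hw1' _ (h ▸ hda)
    · intro h
      have h1 : Sum.inl a = w1 := hw2' _ (h ▸ hda)
      have h2 : Sum.inl b = w1 := hw2' _ (h ▸ hdb)
      rw [← h2] at h1
      exact hab (Sum.inl.inj h1)
  -- counting
  have himg : (Finset.univ.image φ) ⊆ (Finset.univ.erase w1).erase w2 := by
    intro w hw
    obtain ⟨e, -, rfl⟩ := Finset.mem_image.mp hw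
    exact Finset.mem_erase.mpr ⟨(hmiss e).2,
      Finset.mem_erase.mpr ⟨(hmiss e).1, Finset.mem_univ _⟩⟩
  have hcard1 : (Finset.univ.image φ).card = Fintype.card G.edgeSet := by
    rw [Finset.card_image_of_injective _ hinj, Finset.card_univ]
  have hw2ne : w2 ≠ w1 := hw2mem
  have hcard2 : ((Finset.univ.erase w1).erase w2).card
      = Fintype.card (V ⊕ Fin k) - 2 := by
    rw [Finset.card_erase_of_mem (Finset.mem_erase.mpr ⟨hw2ne, Finset.mem_univ _⟩),
      Finset.card_erase_of_mem (Finset.mem_univ _), Finset.card_univ]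
    omega
  have hle := Finset.card_le_card himg
  have hcardW : Fintype.card (V ⊕ Fin k) = Fintype.card V + k := by
    rw [Fintype.card_sum, Fintype.card_fin]
  have hV2 : 2 ≤ Fintype.card V := Fintype.one_lt_card
  rw [hcard1, hcard2, hcardW] at hle
  have hNcard : 2 ≤ Fintype.card V + k := by omega
  omega

end Aux7


section Aux8

lemma sym2_cases {V : Type*} (q : Sym2 V) : ∃ a b, q = s(a, b) := by
  induction q using Sym2.ind with | _ a b => exact ⟨a, b, rfl⟩

lemma frontier_lemma {V : Type*} {G : SimpleGraph V} (hconn : G.Connected)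
    (s : Finset V) (a0 : V) (ha0 : a0 ∈ s) (b0 : V) (hb0 : b0 ∉ s) :
    ∃ a ∈ s, ∃ b ∉ s, G.Adj a b := by
  suffices aux : ∀ (a b : V) (w : G.Walk a b), a ∈ s → b ∉ s →
      ∃ a' ∈ s, ∃ b' ∉ s, G.Adj a' b' by
    obtain ⟨w⟩ := hconn.preconnected a0 b0
    exact aux a0 b0 w ha0 hb0
  intro a b w
  induction w with
  | nil => intro h1 h2; exact absurd h1 h2
  | @cons a c b h p ih =>
    intro h1 h2
    by_cases hc : c ∈ s
    · exact ih hc h2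
    · exact ⟨a, h1, c, hc, h⟩

/-- a connected ordering of the vertices -/
lemma exists_ordering {V : Type*} [Fintype V] [DecidableEq V] (G : SimpleGraph V)
    (hconn : G.Connected) :
    ∃ f : Fin (Fintype.card V) → V, Function.Bijective f ∧
      ∀ i : Fin (Fintype.card V), 0 < (i : ℕ) →
        ∃ j : Fin (Fintype.card V), (j : ℕ) < (i : ℕ) ∧ G.Adj (f j) (f i) := by
  classical
  haveI : Nonempty V := hconn.nonempty
  -- good lists
  set Good : List V → Prop := fun l => l.Nodup ∧
    ∀ i : ℕ, ∀ hi : i < l.length, 0 < i →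
      ∃ j : ℕ, ∃ hj : j < l.length, j < i ∧ G.Adj (l[j]'hj) (l[i]'hi) with hGood
  have hgrow : ∀ d : ℕ, ∀ l : List V, Good l → l ≠ [] →
      l.length + d = Fintype.card V →
      ∃ l' : List V, Good l' ∧ l'.length = Fintype.card V := by
    intro d
    induction d with
    | zero =>
      intro l hl hne hlen
      exact ⟨l, hl, by omega⟩
    | succ d ih =>
      intro l hl hne hlen
      have hlt : l.toFinset.card < Fintype.card V := by
        rw [List.toFinset_card_of_nodup hl.1]
        omega
      obtain ⟨b0, hb0⟩ : ∃ b0, b0 ∉ l.toFinset := by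
        by_contra hno
        push_neg at hno
        have : (Finset.univ : Finset V) ⊆ l.toFinset := fun x _ => hno x
        have := Finset.card_le_card this
        rw [Finset.card_univ] at this
        omega
      obtain ⟨a0, ha0⟩ : ∃ a0, a0 ∈ l.toFinset := by
        obtain ⟨x, hx⟩ := List.exists_mem_of_ne_nil _ hne
        exact ⟨x, List.mem_toFinset.mpr hx⟩
      obtain ⟨a, ha, b, hb, hab⟩ := frontier_lemma hconn l.toFinset a0 ha0 b0 hb0
      refine ih (l ++ [b]) ⟨?_, ?_⟩ (by simp) (by simp; omega)
      · rw [List.nodup_append]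
        refine ⟨hl.1, List.nodup_singleton b, ?_⟩
        intro x hx c hxb
        rw [List.mem_singleton] at hxb
        subst hxb
        intro hxe
        subst hxe
        exact hb (List.mem_toFinset.mpr hx)
      · intro i hi hipos
        rw [List.length_append, List.length_singleton] at hi
        by_cases hcase : i < l.length
        · obtain ⟨j, hj, hji, hadj⟩ := hl.2 i hcase hipos
          refine ⟨j, by simp; omega, hji, ?_⟩
          rwa [List.getElem_append_left hj, List.getElem_append_left hcase]
        · have hieq : i = l.length := by omega
          obtain ⟨j, hj, hja⟩ := List.getElem_of_mem (List.mem_toFinset.mp ha)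
          refine ⟨j, by simp; omega, by omega, ?_⟩
          rw [List.getElem_append_left hj, hja,
            List.getElem_concat_length hieq]
          exact hab
  -- seed
  obtain ⟨v0⟩ := (inferInstance : Nonempty V)
  have hseed : Good [v0] := ⟨List.nodup_singleton v0, by intro i hi hipos; simp at hi; omega⟩
  obtain ⟨l, hl, hlen⟩ := hgrow (Fintype.card V - 1) [v0] hseed (by simp)
    (by simp; have : 0 < Fintype.card V := Fintype.card_pos; omega)
  refine ⟨fun i => l[(i : ℕ)]'(by omega), ?_, ?_⟩
  · rw [Fintype.bijective_iff_injective_and_card]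
    constructor
    · intro i1 i2 heq
      have := List.nodup_iff_injective_get.mp hl.1
        (a₁ := ⟨(i1 : ℕ), by omega⟩) (a₂ := ⟨(i2 : ℕ), by omega⟩)
      simp only [List.get_eq_getElem] at this
      have h2 := this heq
      have h3 : (i1 : ℕ) = (i2 : ℕ) := by simpa using h2
      exact Fin.ext h3
    · simp [Fintype.card_fin]
  · intro i hipos
    obtain ⟨j, hj, hji, hadj⟩ := hl.2 (i : ℕ) (by omega) hipos
    exact ⟨⟨j, by omega⟩, hji, hadj⟩

end Aux8


section Aux9

lemma comp_upper {V : Type*} [Fintype V] [DecidableEq V] (G : SimpleGraph V)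
    [Fintype G.edgeSet] (hconn : G.Connected) (hnt : Nontrivial V) {k : ℕ}
    (hk : k + Fintype.card V = Fintype.card G.edgeSet + 2) :
    ∃ D : (V ⊕ Fin k) → (V ⊕ Fin k) → Prop,
      DigraphAcyclic D ∧ IsCompetitionGraphOf (addIsolated G k) D := by
  classical
  haveI : Nontrivial V := hnt
  have hn2 : 2 ≤ Fintype.card V := Fintype.one_lt_card
  have hmn : Fintype.card V ≤ Fintype.card G.edgeSet + 1 := card_edge_lower G hconn
  set n := Fintype.card V with hn
  set m := Fintype.card G.edgeSet with hm
  obtain ⟨f, hfbij, hford⟩ := exists_ordering G hconn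
  set fE : Fin n ≃ V := Equiv.ofBijective f hfbij with hfE
  have hfEapp : ∀ i, fE i = f i := fun i => rfl
  set prev : Fin n → Fin n :=
    fun i => if h : 0 < (i : ℕ) then (hford i h).choose else i with hprevdef
  have hprevspec : ∀ i : Fin n, 0 < (i : ℕ) →
      (prev i : ℕ) < (i : ℕ) ∧ G.Adj (f (prev i)) (f i) := by
    intro i h
    simp only [hprevdef, dif_pos h]
    exact ⟨(hford i h).choose_spec.1, (hford i h).choose_spec.2⟩
  set Tr : G.edgeSet → Prop := fun e => ∃ i : Fin n, 0 < (i : ℕ) ∧ (i : ℕ) < n - 1 ∧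
    (e : Sym2 V) = s(f i, f (prev i)) with hTr
  have huniq : ∀ i i' : Fin n, 0 < (i : ℕ) → 0 < (i' : ℕ) →
      s(f i, f (prev i)) = s(f i', f (prev i')) → i = i' := by
    intro i i' hi hi' heq
    rw [Sym2.eq_iff] at heq
    have h1 := (hprevspec i hi).1
    have h2 := (hprevspec i' hi').1
    rcases heq with ⟨ha, hb⟩ | ⟨ha, hb⟩
    · exact hfbij.1 ha
    · exfalso
      have e1 : (i : ℕ) = (prev i' : ℕ) := congrArg Fin.val (hfbij.1 ha)
      have e2 : (prev i : ℕ) = (i' : ℕ) := congrArg Fin.val (hfbij.1 hb)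
      omega
  -- counting the tree edges
  have hEquiv : {e : G.edgeSet // Tr e} ≃ {i : Fin n // 0 < (i : ℕ) ∧ (i : ℕ) < n - 1} := by
    refine ⟨fun e => ⟨e.2.choose, e.2.choose_spec.1, e.2.choose_spec.2.1⟩,
      fun i => ⟨⟨s(f i.1, f (prev i.1)),
        (SimpleGraph.mem_edgeSet _).mpr (hprevspec i.1 i.2.1).2.symm⟩,
        ⟨i.1, i.2.1, i.2.2, rfl⟩⟩, ?_, ?_⟩
    · intro e
      apply Subtype.ext
      apply Subtype.ext
      exact e.2.choose_spec.2.2.symm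
    · intro i
      apply Subtype.ext
      have hTre : Tr ⟨s(f i.1, f (prev i.1)),
          (SimpleGraph.mem_edgeSet _).mpr (hprevspec i.1 i.2.1).2.symm⟩ :=
        ⟨i.1, i.2.1, i.2.2, rfl⟩
      exact huniq _ _ hTre.choose_spec.1 i.2.1 hTre.choose_spec.2.2.symm
  have hEquiv2 : {i : Fin n // 0 < (i : ℕ) ∧ (i : ℕ) < n - 1} ≃ Fin (n - 2) := by
    refine ⟨fun i => ⟨(i.1 : ℕ) - 1, by have := i.2; omega⟩,
      fun j => ⟨⟨(j : ℕ) + 1, by have := j.2; omega⟩,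
        ⟨by show 0 < (j : ℕ) + 1; omega, by show (j : ℕ) + 1 < n - 1; have := j.2; omega⟩⟩,
      ?_, ?_⟩
    · intro i
      apply Subtype.ext
      apply Fin.ext
      show ((i.1 : ℕ) - 1) + 1 = (i.1 : ℕ)
      have := i.2
      omega
    · intro j
      apply Fin.ext
      show ((j : ℕ) + 1) - 1 = (j : ℕ)
      omega
  have hcardTr : Fintype.card {e : G.edgeSet // Tr e} = n - 2 := by
    rw [Fintype.card_congr (hEquiv.trans hEquiv2), Fintype.card_fin]
  have hcardNTr : Fintype.card {e : G.edgeSet // ¬ Tr e} = k := by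
    rw [Fintype.card_subtype_compl, hcardTr, ← hm]
    omega
  set gE : {e : G.edgeSet // ¬ Tr e} ≃ Fin k := Fintype.equivFinOfCardEq hcardNTr with hgE
  -- the prey map
  set π : G.edgeSet → (V ⊕ Fin k) := fun e =>
    if h : Tr e then
      Sum.inl (f ⟨(h.choose : ℕ) + 1, by have := h.choose_spec.2.1; omega⟩)
    else Sum.inr (gE ⟨e, h⟩) with hπ
  have hπinj : Function.Injective π := by
    intro e1 e2 heq
    simp only [hπ] at heq
    by_cases h1 : Tr e1 <;> by_cases h2 : Tr e2
    · rw [dif_pos h1, dif_pos h2] at heq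
      have hv := hfbij.1 (Sum.inl.inj heq)
      have h3 : (h1.choose : ℕ) + 1 = (h2.choose : ℕ) + 1 := congrArg Fin.val hv
      have hidx : h1.choose = h2.choose := Fin.ext (by omega)
      apply Subtype.ext
      rw [h1.choose_spec.2.2, h2.choose_spec.2.2, hidx]
    · rw [dif_pos h1, dif_neg h2] at heq
      exact absurd heq (by simp)
    · rw [dif_neg h1, dif_pos h2] at heq
      exact absurd heq (by simp)
    · rw [dif_neg h1, dif_neg h2] at heq
      have := gE.injective (Sum.inr.inj heq)
      exact congrArg Subtype.val this
  -- the digraph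
  set D : (V ⊕ Fin k) → (V ⊕ Fin k) → Prop := fun x y =>
    ∃ e : G.edgeSet, (∃ a : V, x = Sum.inl a ∧ a ∈ (e : Sym2 V)) ∧ y = π e with hD
  set r : (V ⊕ Fin k) → ℕ := Sum.elim (fun v => (fE.symm v : ℕ)) (fun j => n + (j : ℕ))
    with hr
  have hrf : ∀ i : Fin n, r (Sum.inl (f i)) = (i : ℕ) := by
    intro i
    have : fE.symm (f i) = i := by
      rw [← hfEapp]
      exact fE.symm_apply_apply i
    simp only [hr, Sum.elim_inl, this]
  have hrmono : ∀ x y, D x y → r x < r y := by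
    rintro x y ⟨e, ⟨a, rfl, ha⟩, rfl⟩
    by_cases h : Tr e
    · have hπe : π e = Sum.inl (f ⟨(h.choose : ℕ) + 1,
          by have := h.choose_spec.2.1; omega⟩) := by
        simp only [hπ]
        rw [dif_pos h]
      rw [hπe, hrf]
      have hmem : a ∈ s(f h.choose, f (prev h.choose)) := h.choose_spec.2.2 ▸ ha
      rw [Sym2.mem_iff] at hmem
      have hpos := h.choose_spec.1
      rcases hmem with rfl | rfl
      · rw [hrf]
        show (h.choose : ℕ) < (h.choose : ℕ) + 1
        omega
      · rw [hrf]
        have := (hprevspec h.choose hpos).1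
        show (prev h.choose : ℕ) < (h.choose : ℕ) + 1
        omega
    · have hπe : π e = Sum.inr (gE ⟨e, h⟩) := by
        simp only [hπ]
        rw [dif_neg h]
      rw [hπe]
      simp only [hr, Sum.elim_inl, Sum.elim_inr]
      have := (fE.symm a).2
      omega
  have hacyc : DigraphAcyclic D := by
    intro a hTG
    have hlt : ∀ x y, Relation.TransGen D x y → r x < r y := by
      intro x y h
      induction h with
      | single h => exact hrmono _ _ h
      | tail h1 h2 ih => exact lt_trans ih (hrmono _ _ h2)
    exact lt_irrefl _ (hlt a a hTG)
  refine ⟨D, hacyc, ?_⟩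
  intro x y
  rw [addIsolated, SimpleGraph.fromRel_adj]
  constructor
  · rintro ⟨hne, hrel⟩
    refine ⟨hne, ?_⟩
    rcases hrel with ⟨a, b, rfl, rfl, hab⟩ | ⟨a, b, hy, hx, hab⟩
    · exact ⟨π ⟨s(a, b), hab⟩,
        ⟨⟨s(a, b), hab⟩, ⟨a, rfl, Sym2.mem_mk_left a b⟩, rfl⟩,
        ⟨⟨s(a, b), hab⟩, ⟨b, rfl, Sym2.mem_mk_right a b⟩, rfl⟩⟩
    · subst hy
      subst hx
      exact ⟨π ⟨s(a, b), hab⟩,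
        ⟨⟨s(a, b), hab⟩, ⟨b, rfl, Sym2.mem_mk_right a b⟩, rfl⟩,
        ⟨⟨s(a, b), hab⟩, ⟨a, rfl, Sym2.mem_mk_left a b⟩, rfl⟩⟩
  · rintro ⟨hne, v, ⟨e1, ⟨a, rfl, ha⟩, rfl⟩, ⟨e2, ⟨b, rfl, hb⟩, hv2⟩⟩
    have he12 : e1 = e2 := hπinj hv2
    subst he12
    have hab' : a ≠ b := fun h => hne (by rw [h])
    obtain ⟨c, d, hcd⟩ := sym2_cases (e1 : Sym2 V)
    have hadj : G.Adj c d := by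
      rw [← SimpleGraph.mem_edgeSet, ← hcd]
      exact e1.2
    rw [hcd, Sym2.mem_iff] at ha hb
    have hab : G.Adj a b := by
      rcases ha with rfl | rfl <;> rcases hb with rfl | rfl
      · exact absurd rfl hab'
      · exact hadj
      · exact hadj.symm
      · exact absurd rfl hab'
    exact ⟨hne, Or.inl ⟨a, b, rfl, rfl, hab⟩⟩

end Aux9

/-- If `G` is a nontrivial connected triangle-free graph, then
`k(G) = dim H(G) + 1`. -/
theorem stmt0 {V : Type*} [Fintype V] (G : SimpleGraph V)
    (hconn : G.Connected) (hnontrivial : Nontrivial V) (htf : G.CliqueFree 3) :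
    competitionNumber G = holeDim G + 1 := by
  classical
  haveI : Nonempty V := hnontrivial.to_nonempty
  haveI : Fintype ↥G.edgeSet := Fintype.ofFinite _
  have hdim : holeDim G + Fintype.card V = Fintype.card G.edgeSet + 1 :=
    holeDim_eq G hconn htf
  have hup := comp_upper G hconn hnontrivial
    (k := holeDim G + 1) (by omega)
  rw [competitionNumber]
  apply le_antisymm
  · exact Nat.sInf_le hup
  · refine le_csInf ⟨holeDim G + 1, hup⟩ ?_
    intro k hk
    rw [Set.mem_setOf_eq] at hk
    obtain ⟨D, hD, hC⟩ := hk
    have := comp_lower G htf hnontrivial hD hC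
    omega
end

section
/- Let G be a connected graph which has a connected spanning subgraph G' such that G' contains all the triangles of G and k(G') = 1. Then the competition number of G satisfies k(G) ≤ dim H(G) + 1. -/
open SimpleGraph

-- end of walk is in tail of support, when endpoints distinct or walk nonnil
lemma aux_end_mem_tail {V : Type*} {G : SimpleGraph V} {a b : V} (r : G.Walk a b)
    (h : ¬ r.Nil) : b ∈ r.support.tail := by
  cases r with
  | nil => simp at h
  | cons h' r' => simpa using r'.end_mem_support

lemma aux_ne_of_nonnil {V : Type*} {G : SimpleGraph V} {a b : V} (r : G.Walk a b)
    (h : r.length = 0) : a = b := by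
  cases r with
  | nil => rfl
  | cons h' r' => simp at h

lemma aux_edge_of_length_one {V : Type*} {G : SimpleGraph V} {a b : V} (r : G.Walk a b)
    (h : r.length = 1) : s(a, b) ∈ r.edges := by
  cases r with
  | nil => simp at h
  | cons h' r' =>
    cases r' with
    | nil => simp
    | cons h'' r'' => simp [Nat.succ_ne_zero] at h

open Classical in
lemma split_cycle {V : Type*} {G : SimpleGraph V} {v x y : V}
    (w : G.Walk v v) (hw : w.IsCycle) (hx : x ∈ w.support) (hy : y ∈ w.support)
    (hxy : G.Adj x y) (hch : s(x, y) ∉ w.edges) :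
    ∃ (c1 : G.Walk x x) (c2 : G.Walk y y), c1.IsCycle ∧ c2.IsCycle ∧
      c1.length < w.length ∧ c2.length < w.length ∧
      ∀ e : Sym2 V, (if e ∈ w.edges then (1 : ZMod 2) else 0) =
        (if e ∈ c1.edges then 1 else 0) + (if e ∈ c2.edges then 1 else 0) := by
  classical
  set w' := w.rotate x hx with hw'def
  have hw' : w'.IsCycle := hw.rotate hx
  have hrotE : ∀ e, e ∈ w'.edges ↔ e ∈ w.edges := fun e => (w.rotate_edges x hx).mem_iff
  have hy' : y ∈ w'.support := by
    have htail : y ∈ w.support.tail := by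
      rcases (Walk.mem_support_iff (p := w)).mp hy with h | h
      · subst h; exact aux_end_mem_tail w hw.not_nil
      · exact h
    have : y ∈ w'.support.tail := (w.support_rotate x hx).mem_iff.mpr htail
    exact (Walk.mem_support_iff (p := w')).mpr (Or.inr this)
  set p := w'.takeUntil y hy' with hpdef
  set q := w'.dropUntil y hy' with hqdef
  have hspec : p.append q = w' := w'.take_spec hy'
  have hlen' : w'.length = w.length := by
    have h1 : (w.takeUntil x hx).length + (w.dropUntil x hx).length = w.length := by
      have h2 := congrArg Walk.length (w.take_spec hx)
      rw [Walk.length_append] at h2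
      exact h2
    simp only [hw'def, Walk.rotate, Walk.length_append]
    omega
  have hlenpq : p.length + q.length = w.length := by
    have := congrArg Walk.length hspec
    simp only [Walk.length_append] at this
    omega
  have hedges : w'.edges = p.edges ++ q.edges := by
    conv_lhs => rw [← hspec]
    exact Walk.edges_append _ _
  have hEnodup : (p.edges ++ q.edges).Nodup := by
    rw [← hedges]; exact hw'.edges_nodup
  have htails : w'.support.tail = p.support.tail ++ q.support.tail := by
    conv_lhs => rw [← hspec]
    rw [Walk.support_append, List.tail_append_of_ne_nil (Walk.support_ne_nil _)]
  have hTnodup : (p.support.tail ++ q.support.tail).Nodup := by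
    rw [← htails]; exact hw'.support_nodup
  have hxney : x ≠ y := hxy.ne
  have hpnn : ¬ p.Nil := by
    intro h
    exact hxney (aux_ne_of_nonnil p (Walk.nil_iff_length_eq.mp h))
  have hqnn : ¬ q.Nil := by
    intro h
    exact hxney (aux_ne_of_nonnil q (Walk.nil_iff_length_eq.mp h)).symm
  have hyp : y ∈ p.support.tail := aux_end_mem_tail p hpnn
  have hxq : x ∈ q.support.tail := aux_end_mem_tail q hqnn
  have hdisjT : List.Disjoint p.support.tail q.support.tail :=
    List.disjoint_of_nodup_append hTnodup
  have hxnp : x ∉ p.support.tail := fun h => (hdisjT h) hxq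
  have hynq : y ∉ q.support.tail := fun h => hdisjT hyp h
  have hdisjE : List.Disjoint p.edges q.edges := List.disjoint_of_nodup_append hEnodup
  have hpE : ∀ e ∈ p.edges, e ∈ w.edges := fun e he =>
    (hrotE e).mp (hedges ▸ List.mem_append_left _ he)
  have hqE : ∀ e ∈ q.edges, e ∈ w.edges := fun e he =>
    (hrotE e).mp (hedges ▸ List.mem_append_right _ he)
  -- the two cycles
  have hpnd : p.edges.Nodup := (List.nodup_append.mp hEnodup).1
  have hqnd : q.edges.Nodup := (List.nodup_append.mp hEnodup).2.1
  have hptnd : p.support.tail.Nodup := (List.nodup_append.mp hTnodup).1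
  have hqtnd : q.support.tail.Nodup := (List.nodup_append.mp hTnodup).2.1
  have hchp : s(x, y) ∉ p.edges := fun h => hch (hpE _ h)
  have hchq : s(x, y) ∉ q.edges := fun h => hch (hqE _ h)
  have hp2 : 2 ≤ p.length := by
    have h0 : p.length ≠ 0 := fun h => hxney (aux_ne_of_nonnil p h)
    have h1 : p.length ≠ 1 := fun h => hch (hpE _ (aux_edge_of_length_one p h))
    omega
  have hq2 : 2 ≤ q.length := by
    have h0 : q.length ≠ 0 := fun h => hxney (aux_ne_of_nonnil q h).symm
    have h1 : q.length ≠ 1 := fun h => by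
      have := aux_edge_of_length_one q h
      rw [Sym2.eq_swap] at this
      exact hch (hqE _ this)
    omega
  set c1 : G.Walk x x := p.append (Walk.cons hxy.symm Walk.nil) with hc1def
  set c2 : G.Walk y y := q.append (Walk.cons hxy Walk.nil) with hc2def
  have hc1E : c1.edges = p.edges ++ [s(y, x)] := by
    rw [hc1def, Walk.edges_append]; rfl
  have hc2E : c2.edges = q.edges ++ [s(x, y)] := by
    rw [hc2def, Walk.edges_append]; rfl
  have hc1mem : ∀ e, e ∈ c1.edges ↔ e ∈ p.edges ∨ e = s(x, y) := by
    intro e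
    rw [hc1E, List.mem_append, List.mem_singleton, Sym2.eq_swap]
  have hc2mem : ∀ e, e ∈ c2.edges ↔ e ∈ q.edges ∨ e = s(x, y) := by
    intro e
    rw [hc2E, List.mem_append, List.mem_singleton]
  have hc1T : c1.support.tail = p.support.tail ++ [x] := by
    rw [hc1def, Walk.support_append, List.tail_append_of_ne_nil (Walk.support_ne_nil _)]
    rfl
  have hc2T : c2.support.tail = q.support.tail ++ [y] := by
    rw [hc2def, Walk.support_append, List.tail_append_of_ne_nil (Walk.support_ne_nil _)]
    rfl
  refine ⟨c1, c2, ?_, ?_, ?_, ?_, ?_⟩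
  · rw [Walk.isCycle_def, Walk.isTrail_def, hc1E, hc1T]
    refine ⟨?_, ?_, ?_⟩
    · rw [List.nodup_append]
      exact ⟨hpnd, List.nodup_singleton _, by
        intro a ha _ hb rfl
        rw [List.mem_singleton] at hb
        subst hb
        rw [Sym2.eq_swap] at ha
        exact hchp ha⟩
    · intro h
      have := congrArg Walk.length h
      rw [hc1def, Walk.length_append] at this
      simp at this
    · rw [List.nodup_append]
      exact ⟨hptnd, List.nodup_singleton _, by
        intro a ha _ hb rfl
        rw [List.mem_singleton] at hb
        subst hb
        exact hxnp ha⟩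
  · rw [Walk.isCycle_def, Walk.isTrail_def, hc2E, hc2T]
    refine ⟨?_, ?_, ?_⟩
    · rw [List.nodup_append]
      exact ⟨hqnd, List.nodup_singleton _, by
        intro a ha _ hb rfl
        rw [List.mem_singleton] at hb
        subst hb
        exact hchq ha⟩
    · intro h
      have := congrArg Walk.length h
      rw [hc2def, Walk.length_append] at this
      simp at this
    · rw [List.nodup_append]
      exact ⟨hqtnd, List.nodup_singleton _, by
        intro a ha _ hb rfl
        rw [List.mem_singleton] at hb
        subst hb
        exact hynq ha⟩
  · rw [hc1def, Walk.length_append]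
    simp only [Walk.length_cons, Walk.length_nil]
    omega
  · rw [hc2def, Walk.length_append]
    simp only [Walk.length_cons, Walk.length_nil]
    omega
  · intro e
    have hwmem : e ∈ w.edges ↔ e ∈ p.edges ∨ e ∈ q.edges := by
      rw [← hrotE, hedges, List.mem_append]
    by_cases hexy : e = s(x, y)
    · subst hexy
      rw [if_neg hch, if_pos ((hc1mem _).mpr (Or.inr rfl)),
        if_pos ((hc2mem _).mpr (Or.inr rfl))]
      decide
    · by_cases hep : e ∈ p.edges
      · have heq : e ∉ q.edges := fun h => hdisjE hep h
        rw [if_pos (hwmem.mpr (Or.inl hep)), if_pos ((hc1mem _).mpr (Or.inl hep)),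
          if_neg (fun h => by rcases (hc2mem _).mp h with h | h; exact heq h; exact hexy h)]
        ring
      · by_cases heq : e ∈ q.edges
        · rw [if_pos (hwmem.mpr (Or.inr heq)),
            if_neg (fun h => by rcases (hc1mem _).mp h with h | h; exact hep h; exact hexy h),
            if_pos ((hc2mem _).mpr (Or.inl heq))]
          ring
        · rw [if_neg (fun h => by rcases hwmem.mp h with h | h; exact hep h; exact heq h),
            if_neg (fun h => by rcases (hc1mem _).mp h with h | h; exact hep h; exact hexy h),
            if_neg (fun h => by rcases (hc2mem _).mp h with h | h; exact heq h; exact hexy h)]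
          ring

/-- The submodule of vectors supported on edges of `G'`. -/
def suppSub {V : Type*} (G G' : SimpleGraph V) :
    Submodule (ZMod 2) (G.edgeSet → ZMod 2) where
  carrier := {f | ∀ e : G.edgeSet, (e : Sym2 V) ∉ G'.edgeSet → f e = 0}
  add_mem' := by
    intro a b ha hb e he
    simp [ha e he, hb e he]
  zero_mem' := fun e he => rfl
  smul_mem' := by
    intro c a ha e he
    simp [ha e he]

lemma cycleVec_mem_sup {V : Type*} (G G' : SimpleGraph V)
    (htri : ∀ x y z : V, G.Adj x y → G.Adj x z → G.Adj y z → G'.Adj x y) :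
    ∀ (n : ℕ) (v : V) (w : G.Walk v v), w.IsCycle → w.length = n →
      cycleVec G w ∈ holeSpace G ⊔ suppSub G G' := by
  intro n
  induction n using Nat.strong_induction_on with
  | _ n ih =>
    intro v w hw hlen
    by_cases hchord : ∃ x y, x ∈ w.support ∧ y ∈ w.support ∧ G.Adj x y ∧ s(x, y) ∉ w.edges
    · obtain ⟨x, y, hx, hy, hadj, hch⟩ := hchord
      obtain ⟨c1, c2, hc1, hc2, hl1, hl2, hkey⟩ := split_cycle w hw hx hy hadj hch
      have hsum : cycleVec G w = cycleVec G c1 + cycleVec G c2 := by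
        funext e
        exact hkey e.1
      rw [hsum]
      exact add_mem (ih c1.length (hlen ▸ hl1) x c1 hc1 rfl)
        (ih c2.length (hlen ▸ hl2) y c2 hc2 rfl)
    · push_neg at hchord
      by_cases h4 : 4 ≤ w.length
      · exact Submodule.mem_sup_left (Submodule.subset_span
          ⟨v, w, ⟨hw, h4, fun x y hx hy hadj => hchord x y hx hy hadj⟩, rfl⟩)
      · -- triangle
        have h3 : w.length = 3 := by
          have := hw.three_le_length
          omega
        refine Submodule.mem_sup_right ?_
        intro e he
        have : (e : Sym2 V) ∉ w.edges := by
          intro hmem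
          apply he
          clear he hlen hchord h4
          -- destructure the triangle
          cases w with
          | nil => simp at h3
          | cons h1 w1 =>
            cases w1 with
            | nil => simp at h3
            | cons h2 w2 =>
              cases w2 with
              | nil => simp at h3
              | cons h3' w3 =>
                cases w3 with
                | nil =>
                  simp only [Walk.edges_cons, Walk.edges_nil, List.mem_cons,
                    List.not_mem_nil, or_false] at hmem
                  rcases hmem with h | h | h
                  · rw [h, SimpleGraph.mem_edgeSet]
                    exact htri _ _ _ h1 h3'.symm h2
                  · rw [h, SimpleGraph.mem_edgeSet]
                    exact htri _ _ _ h2 h1.symm h3'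
                  · rw [h, SimpleGraph.mem_edgeSet]
                    exact htri _ _ _ h3' h2.symm h1
                | cons h4' w4 => simp at h3
        simp only [cycleVec, this, if_false]



open Classical in
lemma card_le_holeDim {V : Type*} [Fintype V] (G G' : SimpleGraph V)
    (hle : G' ≤ G) (hconn' : G'.Connected)
    (htri : ∀ x y z : V, G.Adj x y → G.Adj x z → G.Adj y z → G'.Adj x y) :
    (G.edgeSet \ G'.edgeSet).ncard ≤ holeDim G := by
  classical
  set T : Set (Sym2 V) := G.edgeSet \ G'.edgeSet with hTdef
  haveI : Fintype ↥T := (Set.toFinite T).fintype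
  haveI : Fintype ↥G.edgeSet := (Set.toFinite _).fintype
  set g : ↥T → ↥G.edgeSet := fun e => ⟨e.1, e.2.1⟩ with hgdef
  set π : (↥G.edgeSet → ZMod 2) →ₗ[ZMod 2] (↥T → ZMod 2) :=
    LinearMap.funLeft (ZMod 2) (ZMod 2) g with hπdef
  -- each indicator vector is in the image of the hole space
  have hind : ∀ i : ↥T, (fun j => if i = j then (1 : ZMod 2) else 0) ∈
      (holeSpace G).map π := by
    rintro ⟨e, hi⟩
    revert hi
    induction e using Sym2.ind with
    | _ a b =>
      intro hi
      have hab : G.Adj a b := (SimpleGraph.mem_edgeSet G).mp hi.1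
      have hnab : s(a, b) ∉ G'.edgeSet := hi.2
      obtain ⟨P0⟩ := hconn' b a
      set pw : G'.Walk b a := P0.toPath.val with hpwdef
      have hp : pw.IsPath := P0.toPath.2
      have hedin : ∀ e ∈ pw.edges, e ∈ G.edgeSet := fun e he =>
        SimpleGraph.edgeSet_mono hle (pw.edges_subset_edgeSet he)
      set pt : G.Walk b a := pw.transfer G hedin with hptdef
      set C : G.Walk a a := Walk.cons hab pt with hCdef
      have hC : C.IsCycle := by
        rw [hCdef, Walk.cons_isCycle_iff]
        constructor
        · rw [Walk.isPath_def, hptdef, Walk.support_transfer]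
          exact hp.support_nodup
        · rw [hptdef, Walk.edges_transfer]
          exact fun h => hnab (pw.edges_subset_edgeSet h)
      have hCE : ∀ e : Sym2 V, e ∈ C.edges ↔ e = s(a, b) ∨ e ∈ pw.edges := by
        intro e
        rw [hCdef, Walk.edges_cons, hptdef, Walk.edges_transfer, List.mem_cons]
      have hmem := cycleVec_mem_sup G G' htri C.length a C hC rfl
      rw [Submodule.mem_sup] at hmem
      obtain ⟨h, hh, k, hk, hsum⟩ := hmem
      refine ⟨h, hh, ?_⟩
      have hπk : π k = 0 := by
        funext j
        exact hk (g j) j.2.2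
      have hπC : π (cycleVec G C) = fun j => if (⟨s(a, b), hi⟩ : ↥T) = j then 1 else 0 := by
        funext j
        simp only [hπdef, LinearMap.funLeft_apply, cycleVec]
        by_cases hj : (j : Sym2 V) = s(a, b)
        · rw [if_pos, if_pos]
          · exact (Subtype.ext hj.symm)
          · exact (hCE _).mpr (Or.inl hj)
        · rw [if_neg, if_neg]
          · exact fun hcon => hj (Subtype.ext_iff.mp hcon).symm
          · intro hcon
            rcases (hCE _).mp hcon with h' | h'
            · exact hj h'
            · exact j.2.2 (pw.edges_subset_edgeSet h')
      have hfin : π h = π (cycleVec G C) := by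
        rw [← hsum, map_add, hπk, add_zero]
      rw [hfin, hπC]
  have hmap : (holeSpace G).map π = ⊤ := by
    rw [Submodule.eq_top_iff']
    intro f
    rw [pi_eq_sum_univ f]
    refine Submodule.sum_mem _ fun i _ => Submodule.smul_mem _ _ ?_
    exact hind i
  have h1 : T.ncard = Module.finrank (ZMod 2) (↥T → ZMod 2) := by
    rw [Module.finrank_pi, Set.ncard_eq_toFinset_card', Set.toFinset_card]
  calc T.ncard = Module.finrank (ZMod 2) (↥T → ZMod 2) := h1
    _ = Module.finrank (ZMod 2) (⊤ : Submodule (ZMod 2) (↥T → ZMod 2)) := (finrank_top (ZMod 2) _).symm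
    _ = Module.finrank (ZMod 2) ((holeSpace G).map π) := by rw [hmap]
    _ ≤ Module.finrank (ZMod 2) (holeSpace G) := Submodule.finrank_map_le π _
    _ = holeDim G := rfl


/-- Let `G` be a connected graph having a connected spanning
subgraph `G'` which contains all the triangles of `G` and has competition
number 1. Then `k(G) ≤ dim H(G) + 1`. -/
theorem stmt10 {V : Type*} [Fintype V] (G G' : SimpleGraph V)
    (hconn : G.Connected) (hle : G' ≤ G) (hconn' : G'.Connected)
    (htri : ∀ x y z : V, G.Adj x y → G.Adj x z → G.Adj y z → G'.Adj x y)
    (hk : competitionNumber G' = 1) :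
    competitionNumber G ≤ holeDim G + 1 := by
  classical
  -- extract the digraph realizing k(G') = 1
  set S' : Set ℕ := {k : ℕ | ∃ D : (V ⊕ Fin k) → (V ⊕ Fin k) → Prop,
    DigraphAcyclic D ∧ IsCompetitionGraphOf (addIsolated G' k) D} with hS'def
  have hne : S'.Nonempty := by
    by_contra h
    rw [Set.not_nonempty_iff_eq_empty] at h
    have : competitionNumber G' = 0 := by
      rw [competitionNumber, ← hS'def, h, Nat.sInf_empty]
    omega
  have h1mem : (1 : ℕ) ∈ S' := by
    have h0 := Nat.sInf_mem hne
    have : sInf S' = 1 := hk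
    rwa [this] at h0
  obtain ⟨D', hD'ac, hD'comp⟩ := h1mem
  -- the extra edges
  set T : Set (Sym2 V) := G.edgeSet \ G'.edgeSet with hTdef
  haveI : Fintype ↥T := (Set.toFinite T).fintype
  set m : ℕ := Fintype.card ↥T with hmdef
  have hmcard : T.ncard = m := by
    rw [← Nat.card_coe_set_eq, Nat.card_eq_fintype_card]
  set g : Fin m ≃ ↥T := (Fintype.equivFin ↥T).symm with hgdef
  -- notation for the new digraph
  set ρ : V ⊕ Fin (m + 1) → V ⊕ Fin 1 := Sum.map id (fun _ => 0) with hρdef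
  set ι : V ⊕ Fin 1 → V ⊕ Fin (m + 1) := Sum.map id (fun _ => 0) with hιdef
  set New : V ⊕ Fin (m + 1) → Prop := fun a => ∃ i : Fin m, a = Sum.inr i.succ
    with hNewdef
  set D : (V ⊕ Fin (m + 1)) → (V ⊕ Fin (m + 1)) → Prop := fun a b =>
    (¬ New a ∧ ¬ New b ∧ D' (ρ a) (ρ b)) ∨
    (∃ (x : V) (i : Fin m), a = Sum.inl x ∧ b = Sum.inr i.succ ∧ x ∈ (g i : Sym2 V))
    with hDdef
  have hNewInl : ∀ x : V, ¬ New (Sum.inl x) := by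
    rintro x ⟨i, h⟩
    simp [hNewdef] at h
  have hNew0 : ¬ New (Sum.inr (0 : Fin (m + 1))) := by
    rintro ⟨i, h⟩
    exact Fin.succ_ne_zero i (Sum.inr.inj h).symm
  have hιnotNew : ∀ c, ¬ New (ι c) := by
    rintro (x | j)
    · exact hNewInl x
    · exact hNew0
  have hρι : ∀ c, ρ (ι c) = c := by
    rintro (x | j)
    · rfl
    · have : j = 0 := Subsingleton.elim _ _
      rw [this]
      rfl
  have hιρ : ∀ a, ¬ New a → ι (ρ a) = a := by
    rintro (x | j) h
    · rfl
    · induction j using Fin.cases with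
      | zero => rfl
      | succ i => exact absurd ⟨i, rfl⟩ h
  -- the digraph is acyclic
  have hstep : ∀ a b, D a b → ¬ New a := by
    intro a b hab
    rcases hab with ⟨ha, -, -⟩ | ⟨x, i, ha, -, -⟩
    · exact ha
    · rw [ha]; exact hNewInl x
  have hfirst : ∀ a b, Relation.TransGen D a b → ∃ c, D a c := by
    intro a b h
    induction h with
    | single h => exact ⟨_, h⟩
    | tail _ _ ih => exact ih
  have hproj : ∀ a b, Relation.TransGen D a b → ¬ New b →
      Relation.TransGen D' (ρ a) (ρ b) ∧ ¬ New a := by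
    intro a b h
    induction h with
    | single hab =>
      intro hb
      rcases hab with ⟨ha, -, hd⟩ | ⟨x, i, -, hbeq, -⟩
      · exact ⟨Relation.TransGen.single hd, ha⟩
      · exact absurd ⟨i, hbeq⟩ hb
    | tail _ hbc ih =>
      intro hc
      rcases hbc with ⟨hb, -, hd⟩ | ⟨x, i, -, hceq, -⟩
      · obtain ⟨ht, ha⟩ := ih hb
        exact ⟨ht.tail hd, ha⟩
      · exact absurd ⟨i, hceq⟩ hc
  have hDac : DigraphAcyclic D := by
    intro a h
    have hna : ¬ New a := by
      obtain ⟨c, hc⟩ := hfirst a a h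
      exact hstep a c hc
    obtain ⟨ht, -⟩ := hproj a a h hna
    exact hD'ac _ ht
  -- the competition graph of D is G with m+1 isolated vertices
  have hDcomp : IsCompetitionGraphOf (addIsolated G (m + 1)) D := by
    intro X Y
    constructor
    · intro hAdj
      rw [addIsolated, SimpleGraph.fromRel_adj] at hAdj
      obtain ⟨hne', hr⟩ := hAdj
      have hXY : ∃ a b, X = Sum.inl a ∧ Y = Sum.inl b ∧ G.Adj a b := by
        rcases hr with ⟨a, b, h1, h2, h3⟩ | ⟨a, b, h1, h2, h3⟩
        exacts [⟨a, b, h1, h2, h3⟩, ⟨b, a, h2, h1, h3.symm⟩]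
      obtain ⟨a, b, hX, hY, hab⟩ := hXY
      refine ⟨hne', ?_⟩
      by_cases hab' : G'.Adj a b
      · have hadj1 : (addIsolated G' 1).Adj (Sum.inl a) (Sum.inl b) := by
          rw [addIsolated, SimpleGraph.fromRel_adj]
          exact ⟨by simp [hab'.ne], Or.inl ⟨a, b, rfl, rfl, hab'⟩⟩
        obtain ⟨-, v', hv1, hv2⟩ := (hD'comp _ _).mp hadj1
        refine ⟨ι v', Or.inl ⟨?_, hιnotNew v', ?_⟩, Or.inl ⟨?_, hιnotNew v', ?_⟩⟩
        · rw [hX]; exact hNewInl a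
        · rw [hX, hρι]
          exact hv1
        · rw [hY]; exact hNewInl b
        · rw [hY, hρι]
          exact hv2
      · have hT : s(a, b) ∈ T := ⟨(SimpleGraph.mem_edgeSet G).mpr hab,
          fun h => hab' ((SimpleGraph.mem_edgeSet G').mp h)⟩
        set i : Fin m := g.symm ⟨s(a, b), hT⟩ with hidef
        have hgi : (g i : Sym2 V) = s(a, b) := by
          rw [hidef, Equiv.apply_symm_apply]
        refine ⟨Sum.inr i.succ, Or.inr ⟨a, i, hX, rfl, ?_⟩, Or.inr ⟨b, i, hY, rfl, ?_⟩⟩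
        · rw [hgi]; exact Sym2.mem_mk_left a b
        · rw [hgi]; exact Sym2.mem_mk_right a b
    · rintro ⟨hne', v, hXv, hYv⟩
      rw [addIsolated, SimpleGraph.fromRel_adj]
      refine ⟨hne', ?_⟩
      rcases hXv with ⟨hnX, hnv, hdX⟩ | ⟨x, i, hXeq, hveq, hxi⟩
      · rcases hYv with ⟨hnY, -, hdY⟩ | ⟨y, i, hYeq, hveq, hyi⟩
        · have hρne : ρ X ≠ ρ Y := fun h =>
            hne' (by rw [← hιρ X hnX, ← hιρ Y hnY, h])
          have hadj' := (hD'comp (ρ X) (ρ Y)).mpr ⟨hρne, ρ v, hdX, hdY⟩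
          rw [addIsolated, SimpleGraph.fromRel_adj] at hadj'
          obtain ⟨-, hr⟩ := hadj'
          have hXY : ∃ a b, ρ X = Sum.inl a ∧ ρ Y = Sum.inl b ∧ G'.Adj a b := by
            rcases hr with ⟨a, b, h1, h2, h3⟩ | ⟨a, b, h1, h2, h3⟩
            exacts [⟨a, b, h1, h2, h3⟩, ⟨b, a, h2, h1, h3.symm⟩]
          obtain ⟨a, b, ha, hb, hab⟩ := hXY
          have hXa : X = Sum.inl a := by
            rw [← hιρ X hnX, ha]
            rfl
          have hYb : Y = Sum.inl b := by
            rw [← hιρ Y hnY, hb]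
            rfl
          exact Or.inl ⟨a, b, hXa, hYb, hle hab⟩
        · exact absurd ⟨i, hveq⟩ hnv
      · rcases hYv with ⟨-, hnv, -⟩ | ⟨y, i', hYeq, hveq', hyi⟩
        · exact absurd ⟨i, hveq⟩ hnv
        · have hii : i = i' := by
            rw [hveq] at hveq'
            exact Fin.succ_injective _ (Sum.inr.inj hveq'.symm).symm
          subst hii
          have hxyne : x ≠ y := fun h => hne' (by rw [hXeq, hYeq, h])
          have hE : (g i : Sym2 V) ∈ G.edgeSet := (g i).2.1
          have hgxy : (g i : Sym2 V) = s(x, y) :=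
            (Sym2.mem_and_mem_iff hxyne).mp ⟨hxi, hyi⟩
          rw [hgxy] at hE
          exact Or.inl ⟨x, y, hXeq, hYeq, (SimpleGraph.mem_edgeSet G).mp hE⟩
  -- conclude
  have hmemG : (m + 1) ∈ {k : ℕ | ∃ D : (V ⊕ Fin k) → (V ⊕ Fin k) → Prop,
      DigraphAcyclic D ∧ IsCompetitionGraphOf (addIsolated G k) D} :=
    ⟨D, hDac, hDcomp⟩
  have h2 : competitionNumber G ≤ m + 1 := Nat.sInf_le hmemG
  have h3 : T.ncard ≤ holeDim G := card_le_holeDim G G' hle hconn' htri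
  omega
end

section
/- If a connected graph G has at most three triangles, then the competition number of G is at most the dimension of the hole space of G plus one, i.e., k(G) ≤ dim H(G) + 1. -/
open SimpleGraph

/-! ## Auxiliary development -/

open Classical Function

namespace Stmt13

variable {V : Type*}

/-- The span of characteristic vectors of 3-cycles (triangles). -/
noncomputable def triSpace (G : SimpleGraph V) : Submodule (ZMod 2) (G.edgeSet → ZMod 2) :=
  Submodule.span (ZMod 2)
    {f | ∃ (v : V) (w : G.Walk v v), w.IsCycle ∧ w.length = 3 ∧ f = cycleVec G w}

/-- Lemma A: the chain-of-cliques construction. -/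
lemma lemA [Fintype V] (G : SimpleGraph V) (ρ : V → ℕ) (hρ : Injective ρ)
    (c : V → Finset V)
    (hc1 : ∀ v, v ∈ c v)
    (hc2 : ∀ v a b, a ∈ c v → b ∈ c v → a ≠ b → G.Adj a b)
    (hc3 : ∀ v u, u ∈ c v → ρ v ≤ ρ u)
    {m : ℕ} (Ex : Fin m → Finset V)
    (hEx : ∀ j a b, a ∈ Ex j → b ∈ Ex j → a ≠ b → G.Adj a b)
    (hcov : ∀ a b, G.Adj a b → (∃ w, a ∈ c w ∧ b ∈ c w) ∨ ∃ j, a ∈ Ex j ∧ b ∈ Ex j) :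
    competitionNumber G ≤ m + 1 := by
  classical
  -- the "previous vertex" (prey) assignment
  set prey : V → (V ⊕ Fin (m+1)) := fun w =>
    if h : ∃ u, ρ u < ρ w ∧ ∀ x, ρ x < ρ w → ρ x ≤ ρ u then Sum.inl h.choose
    else Sum.inr 0 with hprey_def
  have hpreyspec : ∀ w : V, (∃ u, prey w = Sum.inl u ∧ ρ u < ρ w ∧
      (∀ x, ρ x < ρ w → ρ x ≤ ρ u)) ∨ (prey w = Sum.inr 0 ∧ ∀ x, ρ w ≤ ρ x) := by
    intro w
    by_cases h : ∃ u, ρ u < ρ w ∧ ∀ x, ρ x < ρ w → ρ x ≤ ρ u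
    · left
      exact ⟨h.choose, by simp only [hprey_def, dif_pos h], h.choose_spec.1, h.choose_spec.2⟩
    · right
      constructor
      · simp only [hprey_def, dif_neg h]
      · intro x
        by_contra hx
        push_neg at hx
        apply h
        obtain ⟨u, hu, humax⟩ := Finset.exists_max_image
          (Finset.univ.filter (fun y => ρ y < ρ w)) ρ
          ⟨x, by simp only [Finset.mem_filter, Finset.mem_univ, true_and]; exact hx⟩
        simp only [Finset.mem_filter, Finset.mem_univ, true_and] at hu
        refine ⟨u, hu, fun y hy => humax y ?_⟩
        simp only [Finset.mem_filter, Finset.mem_univ, true_and]; exact hy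
  have hpreyinj : Injective prey := by
    intro w1 w2 h12
    rcases hpreyspec w1 with ⟨u1, he1, hlt1, hmax1⟩ | ⟨he1, hbot1⟩ <;>
      rcases hpreyspec w2 with ⟨u2, he2, hlt2, hmax2⟩ | ⟨he2, hbot2⟩
    · rw [he1, he2] at h12
      injection h12 with h12
      subst h12
      rcases lt_trichotomy (ρ w1) (ρ w2) with h | h | h
      · exact absurd (hmax2 w1 h) (not_le.mpr hlt1)
      · exact hρ h
      · exact absurd (hmax1 w2 h) (not_le.mpr hlt2)
    · rw [he1, he2] at h12; exact absurd h12 (by simp)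
    · rw [he1, he2] at h12; exact absurd h12 (by simp)
    · exact hρ (le_antisymm (hbot1 w2) (hbot2 w1))
  -- the digraph
  set D : (V ⊕ Fin (m+1)) → (V ⊕ Fin (m+1)) → Prop := fun X Y =>
    ∃ a, X = Sum.inl a ∧ ((∃ w, a ∈ c w ∧ Y = prey w) ∨
      (∃ j : Fin m, a ∈ Ex j ∧ Y = Sum.inr j.succ)) with hD_def
  -- rank function decreases along arcs
  set Φ : V ⊕ Fin (m+1) → ℕ := Sum.elim (fun a => ρ a + 1) (fun _ => 0) with hΦ
  have hdec : ∀ X Y, D X Y → Φ Y < Φ X := by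
    rintro X Y ⟨a, rfl, ⟨w, haw, rfl⟩ | ⟨j, haj, rfl⟩⟩
    · have hwa : ρ w ≤ ρ a := hc3 w a haw
      rcases hpreyspec w with ⟨u, he, hlt, -⟩ | ⟨he, -⟩ <;> rw [he] <;>
        simp only [hΦ, Sum.elim_inl, Sum.elim_inr]
      · omega
      · omega
    · simp only [hΦ, Sum.elim_inl, Sum.elim_inr]
      omega
  refine Nat.sInf_le ⟨D, ?_, ?_⟩
  · -- acyclicity
    intro X hX
    have : ∀ X Y, Relation.TransGen D X Y → Φ Y < Φ X := by
      intro X Y h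
      induction h with
      | single h => exact hdec _ _ h
      | tail h1 h2 ih => exact lt_trans (hdec _ _ h2) ih
    exact lt_irrefl _ (this X X hX)
  · -- competition graph
    intro X Y
    constructor
    · intro hXY
      rw [addIsolated, SimpleGraph.fromRel_adj] at hXY
      obtain ⟨hne, hrel⟩ := hXY
      refine ⟨hne, ?_⟩
      have key : ∀ a b : V, G.Adj a b →
          ∃ Z, D (Sum.inl a) Z ∧ D (Sum.inl b) Z := by
        intro a b hab
        rcases hcov a b hab with ⟨w, haw, hbw⟩ | ⟨j, haj, hbj⟩
        · exact ⟨prey w, ⟨a, rfl, Or.inl ⟨w, haw, rfl⟩⟩, ⟨b, rfl, Or.inl ⟨w, hbw, rfl⟩⟩⟩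
        · exact ⟨Sum.inr j.succ, ⟨a, rfl, Or.inr ⟨j, haj, rfl⟩⟩,
            ⟨b, rfl, Or.inr ⟨j, hbj, rfl⟩⟩⟩
      rcases hrel with ⟨a, b, rfl, rfl, hab⟩ | ⟨a, b, rfl, rfl, hab⟩
      · exact key a b hab
      · obtain ⟨Z, h1, h2⟩ := key a b hab
        exact ⟨Z, h2, h1⟩
    · rintro ⟨hne, Z, ⟨a, rfl, hra⟩, ⟨b, rfl, hrb⟩⟩
      have hab : a ≠ b := fun h => hne (by rw [h])
      rw [addIsolated, SimpleGraph.fromRel_adj]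
      refine ⟨hne, Or.inl ⟨a, b, rfl, rfl, ?_⟩⟩
      rcases hra with ⟨w1, haw1, hZ1⟩ | ⟨j1, haj1, hZ1⟩ <;>
        rcases hrb with ⟨w2, hbw2, hZ2⟩ | ⟨j2, hbj2, hZ2⟩
      · have hw : w1 = w2 := hpreyinj (by rw [← hZ1, ← hZ2])
        subst hw
        exact hc2 w1 a b haw1 hbw2 hab
      · exfalso
        rw [hZ1] at hZ2
        rcases hpreyspec w1 with ⟨u, he, -, -⟩ | ⟨he, -⟩ <;> rw [he] at hZ2
        · exact absurd hZ2 (by simp)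
        · injection hZ2 with h
          exact (Fin.succ_ne_zero j2) h.symm
      · exfalso
        rw [hZ2] at hZ1
        rcases hpreyspec w2 with ⟨u, he, -, -⟩ | ⟨he, -⟩ <;> rw [he] at hZ1
        · exact absurd hZ1 (by simp)
        · injection hZ1 with h
          exact (Fin.succ_ne_zero j1) h.symm
      · have hj : j1 = j2 := by
          rw [hZ1] at hZ2
          injection hZ2 with h
          exact Fin.succ_injective _ h
        subst hj
        exact hEx j1 a b haj1 hbj2 hab

lemma mem_tail_of_closed {G : SimpleGraph V} {v : V} {w : G.Walk v v}
    (hw : w ≠ SimpleGraph.Walk.nil) {y : V} (hy : y ∈ w.support) :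
    y ∈ w.support.tail := by
  cases w with
  | nil => exact absurd rfl hw
  | cons h p =>
    rw [SimpleGraph.Walk.support_cons, List.mem_cons] at hy
    rw [SimpleGraph.Walk.support_cons, List.tail_cons]
    rcases hy with rfl | hy
    · exact SimpleGraph.Walk.end_mem_support p
    · exact hy

lemma edges_singleton_of_length_one {G : SimpleGraph V} {x y : V} {p : G.Walk x y}
    (hl : p.length = 1) : p.edges = [s(x,y)] := by
  cases p with
  | nil => simp at hl
  | cons h p' =>
    rw [SimpleGraph.Walk.length_cons] at hl
    have hp'0 : p'.length = 0 := by omega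
    have := SimpleGraph.Walk.eq_of_length_eq_zero hp'0
    subst this
    have : p'.edges = [] := List.length_eq_zero_iff.mp (by rw [SimpleGraph.Walk.length_edges, hp'0])
    rw [SimpleGraph.Walk.edges_cons, this]

/-- Lemma C: every cycle vector lies in the span of holes and triangles. -/
lemma cycle_mem_span (G : SimpleGraph V) (v : V) (w : G.Walk v v) (hw : w.IsCycle) :
    cycleVec G w ∈ holeSpace G ⊔ triSpace G := by
  suffices H : ∀ (n : ℕ) (v : V) (w : G.Walk v v), w.IsCycle → w.length ≤ n →
      cycleVec G w ∈ holeSpace G ⊔ triSpace G from H w.length v w hw le_rfl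
  clear hw w v
  intro n
  induction n with
  | zero =>
    intro v w hw hl
    have := hw.three_le_length
    omega
  | succ n ih =>
    intro v w hw hl
    by_cases hchord : ∃ x y, x ∈ w.support ∧ y ∈ w.support ∧ G.Adj x y ∧ s(x,y) ∉ w.edges
    · -- split the cycle along a chord
      obtain ⟨x, y, hxs, hys, hadj, hne⟩ := hchord
      set w' : G.Walk x x := w.rotate x hxs with hw'_def
      have hw'c : w'.IsCycle := hw.rotate hxs
      have hedges : ∀ e, e ∈ w'.edges ↔ e ∈ w.edges :=
        fun e => (SimpleGraph.Walk.rotate_edges w x hxs).mem_iff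
      have hne' : s(x,y) ∉ w'.edges := fun h => hne ((hedges _).mp h)
      have hys' : y ∈ w'.support := by
        rw [SimpleGraph.Walk.support_eq_cons, List.mem_cons]
        right
        refine (SimpleGraph.Walk.support_rotate w x hxs).mem_iff.mpr ?_
        exact mem_tail_of_closed hw.ne_nil hys
      set p : G.Walk x y := w'.takeUntil y hys' with hp_def
      set q : G.Walk y x := w'.dropUntil y hys' with hq_def
      have hspec : p.append q = w' := SimpleGraph.Walk.take_spec w' hys'
      have hxy : x ≠ y := hadj.ne
      -- support and edge structure
      have hsupp : w'.support.tail = p.support.tail ++ q.support.tail := by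
        have h1 : (p.append q).support = p.support ++ q.support.tail :=
          SimpleGraph.Walk.support_append p q
        rw [hspec] at h1
        rw [SimpleGraph.Walk.support_eq_cons w', h1, SimpleGraph.Walk.support_eq_cons p]
        simp
      have htailnd : w'.support.tail.Nodup := hw'c.support_nodup
      rw [hsupp] at htailnd
      have hpnd : p.support.tail.Nodup := (List.nodup_append.mp htailnd).1
      have hqnd : q.support.tail.Nodup := (List.nodup_append.mp htailnd).2.1
      have hdisj : ∀ a, a ∈ p.support.tail → a ∈ q.support.tail → False := by
        intro a h1 h2
        exact (List.nodup_append.mp htailnd).2.2 _ h1 _ h2 rfl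
      have hppath : p.IsPath := by
        rw [SimpleGraph.Walk.isPath_def, SimpleGraph.Walk.support_eq_cons p, List.nodup_cons]
        refine ⟨fun hxp => ?_, hpnd⟩
        exact hdisj x hxp (SimpleGraph.Walk.end_mem_tail_support_of_ne (Ne.symm hxy) q)
      have hqpath : q.IsPath := by
        rw [SimpleGraph.Walk.isPath_def, SimpleGraph.Walk.support_eq_cons q, List.nodup_cons]
        refine ⟨fun hyq => ?_, hqnd⟩
        exact hdisj y (SimpleGraph.Walk.end_mem_tail_support_of_ne hxy p) hyq
      -- edges split
      have hedgesplit : w'.edges = p.edges ++ q.edges := by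
        rw [← hspec, SimpleGraph.Walk.edges_append]
      have hednd : w'.edges.Nodup := hw'c.isCircuit.isTrail.edges_nodup
      rw [hedgesplit] at hednd
      have hedisj : ∀ e, e ∈ p.edges → e ∈ q.edges → False := by
        intro e h1 h2
        exact (List.nodup_append.mp hednd).2.2 _ h1 _ h2 rfl
      have hnep : s(x,y) ∉ p.edges := fun h => hne' (hedgesplit ▸ List.mem_append_left _ h)
      have hneq : s(x,y) ∉ q.edges := fun h => hne' (hedgesplit ▸ List.mem_append_right _ h)
      -- lengths
      have hlen : p.length + q.length = w.length := by
        have h1 := SimpleGraph.Walk.length_append p q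
        rw [hspec] at h1
        have h3 := SimpleGraph.Walk.length_append (w.takeUntil x hxs) (w.dropUntil x hxs)
        rw [SimpleGraph.Walk.take_spec] at h3
        have h4 : w'.length = (w.dropUntil x hxs).length + (w.takeUntil x hxs).length := by
          rw [hw'_def]
          simp only [SimpleGraph.Walk.rotate, SimpleGraph.Walk.length_append]
        omega
      have hp1 : p.length ≠ 0 := by
        intro h0
        exact hxy (SimpleGraph.Walk.eq_of_length_eq_zero h0)
      have hp2 : p.length ≠ 1 := by
        intro h1
        exact hnep (by rw [edges_singleton_of_length_one h1]; exact List.mem_singleton_self _)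
      have hq1 : q.length ≠ 0 := by
        intro h0
        exact hxy (SimpleGraph.Walk.eq_of_length_eq_zero h0).symm
      have hq2 : q.length ≠ 1 := by
        intro h1
        apply hneq
        rw [edges_singleton_of_length_one h1]
        rw [Sym2.eq_swap]
        exact List.mem_singleton_self _
      -- the two smaller cycles
      set c1 : G.Walk y y := SimpleGraph.Walk.cons hadj.symm p with hc1_def
      set c2 : G.Walk x x := SimpleGraph.Walk.cons hadj q with hc2_def
      have hc1 : c1.IsCycle := by
        rw [hc1_def, SimpleGraph.Walk.cons_isCycle_iff]
        exact ⟨hppath, fun h => hnep (by rwa [Sym2.eq_swap] at h)⟩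
      have hc2 : c2.IsCycle := by
        rw [hc2_def, SimpleGraph.Walk.cons_isCycle_iff]
        exact ⟨hqpath, hneq⟩
      have hl1 : c1.length ≤ n := by
        rw [hc1_def, SimpleGraph.Walk.length_cons]
        omega
      have hl2 : c2.length ≤ n := by
        rw [hc2_def, SimpleGraph.Walk.length_cons]
        omega
      have hsum : cycleVec G w = cycleVec G c1 + cycleVec G c2 := by
        funext e
        simp only [cycleVec, Pi.add_apply]
        have hc1e : c1.edges = s(y,x) :: p.edges := by rw [hc1_def, SimpleGraph.Walk.edges_cons]
        have hc2e : c2.edges = s(x,y) :: q.edges := by rw [hc2_def, SimpleGraph.Walk.edges_cons]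
        have hwe : ∀ e', e' ∈ w.edges ↔ (e' ∈ p.edges ∨ e' ∈ q.edges) := by
          intro e'
          rw [← hedges, hedgesplit, List.mem_append]
        by_cases hexy : (e : Sym2 V) = s(x,y)
        · rw [if_neg (fun h => hne (hexy ▸ h))]
          rw [if_pos, if_pos]
          · decide
          · rw [hc2e, hexy]; exact List.mem_cons_self
          · rw [hc1e, hexy, Sym2.eq_swap]; exact List.mem_cons_self
        · have h1 : ((e : Sym2 V) ∈ c1.edges) ↔ ((e : Sym2 V) ∈ p.edges) := by
            rw [hc1e, List.mem_cons]
            constructor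
            · rintro (h | h)
              · exact absurd (h.trans (Sym2.eq_swap)) hexy
              · exact h
            · exact Or.inr
          have h2 : ((e : Sym2 V) ∈ c2.edges) ↔ ((e : Sym2 V) ∈ q.edges) := by
            rw [hc2e, List.mem_cons]
            constructor
            · rintro (h | h)
              · exact absurd h hexy
              · exact h
            · exact Or.inr
          by_cases hp : (e : Sym2 V) ∈ p.edges <;> by_cases hq : (e : Sym2 V) ∈ q.edges
          · exact absurd hq (fun h => hedisj _ hp h)
          · rw [if_pos ((hwe _).mpr (Or.inl hp)), if_pos (h1.mpr hp),
              if_neg (fun h => hq (h2.mp h))]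
            decide
          · rw [if_pos ((hwe _).mpr (Or.inr hq)), if_neg (fun h => hp (h1.mp h)),
              if_pos (h2.mpr hq)]
            decide
          · rw [if_neg (fun h => by rcases (hwe _).mp h with h | h; exacts [hp h, hq h]),
              if_neg (fun h => hp (h1.mp h)), if_neg (fun h => hq (h2.mp h))]
            decide
      rw [hsum]
      exact Submodule.add_mem _ (ih y c1 hc1 hl1) (ih x c2 hc2 hl2)
    · -- no chord: an induced cycle, hence a hole or a triangle
      push_neg at hchord
      rcases lt_or_ge w.length 4 with h4 | h4
      · -- triangle
        have h3 : w.length = 3 := by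
          have := hw.three_le_length
          omega
        apply Submodule.mem_sup_right
        apply Submodule.subset_span
        exact ⟨v, w, hw, h3, rfl⟩
      · -- hole
        apply Submodule.mem_sup_left
        apply Submodule.subset_span
        exact ⟨v, w, ⟨hw, h4, hchord⟩, rfl⟩

section OrderB

/-- walk avoiding the complement of `s` gives reachability in the induced graph. -/
lemma reach_induce {G : SimpleGraph V} {s : Set V} :
    ∀ {u v : V} (w : G.Walk u v), (∀ y ∈ w.support, y ∈ s) → ∀ (hu : u ∈ s) (hv : v ∈ s),
      (G.induce s).Reachable ⟨u, hu⟩ ⟨v, hv⟩ := by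
  intro u v w
  induction w with
  | nil =>
    intro _ hu hv
    rfl
  | @cons a b c h p ih =>
    intro hw hu hv
    have hmem : ∀ y ∈ p.support, y ∈ s := by
      intro y hy
      apply hw
      rw [SimpleGraph.Walk.support_cons]
      exact List.mem_cons_of_mem _ hy
    have hb : b ∈ s := hmem b (SimpleGraph.Walk.start_mem_support p)
    have hadj : (G.induce s).Adj ⟨a, hu⟩ ⟨b, hb⟩ := by
      simp only [SimpleGraph.induce, SimpleGraph.comap_adj, Function.Embedding.coe_subtype]
      exact h
    exact hadj.reachable.trans (ih hmem hb hv)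

lemma exists_walk_avoid [Fintype V] {G : SimpleGraph V} (hconn : G.Connected) {r x : V}
    (hx : ∀ u, G.dist r u ≤ G.dist r x) (hxr : r ≠ x) :
    ∀ u, u ≠ x → ∃ w : G.Walk u r, ∀ y ∈ w.support, y ≠ x := by
  have key : ∀ (n : ℕ) (u : V), G.dist r u ≤ n → u ≠ x →
      ∃ w : G.Walk u r, ∀ y ∈ w.support, y ≠ x := by
    intro n
    induction n with
    | zero =>
      intro u hd hux
      have hru : r = u := (hconn.dist_eq_zero_iff).mp (Nat.le_zero.mp hd)
      subst hru
      exact ⟨SimpleGraph.Walk.nil, by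
        intro y hy
        rw [SimpleGraph.Walk.support_nil, List.mem_singleton] at hy
        subst hy; exact hxr⟩
    | succ n ih =>
      intro u hd hux
      rcases eq_or_ne u r with rfl | hur
      · exact ⟨SimpleGraph.Walk.nil, by
          intro y hy
          rw [SimpleGraph.Walk.support_nil, List.mem_singleton] at hy
          subst hy; exact hux⟩
      · obtain ⟨w, hw⟩ := (hconn u r).exists_walk_length_eq_dist
        cases w with
        | nil => exact absurd rfl hur
        | @cons _ b _ h p =>
          have hlen : p.length + 1 = G.dist u r := by
            rw [← hw, SimpleGraph.Walk.length_cons]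
          have hcomm : G.dist u r = G.dist r u := SimpleGraph.dist_comm
          have hdrb : G.dist r b ≤ p.length := by
            have h5 := SimpleGraph.dist_le p.reverse
            rwa [SimpleGraph.Walk.length_reverse] at h5
          have hpos : 0 < G.dist r u := by
            rw [← hcomm]
            exact hconn.pos_dist_of_ne hur
          have hdb : G.dist r b ≤ n := by omega
          have hbx : b ≠ x := by
            rintro rfl
            have h1 := hx u
            omega
          obtain ⟨w', hw'⟩ := ih b hdb hbx
          refine ⟨SimpleGraph.Walk.cons h w', ?_⟩
          intro y hy
          rw [SimpleGraph.Walk.support_cons, List.mem_cons] at hy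
          rcases hy with rfl | hy
          · exact hux
          · exact hw' y hy
  intro u hux
  exact key (G.dist r u) u le_rfl hux

lemma noncut_of_maxdist [Fintype V] {G : SimpleGraph V} (hconn : G.Connected) {r x : V}
    (hx : ∀ u, G.dist r u ≤ G.dist r x) (hxr : r ≠ x) :
    (G.induce {y | y ≠ x}).Connected := by
  rw [SimpleGraph.connected_iff]
  constructor
  · rintro ⟨u, hu⟩ ⟨v, hv⟩
    obtain ⟨w1, h1⟩ := exists_walk_avoid hconn hx hxr u hu
    obtain ⟨w2, h2⟩ := exists_walk_avoid hconn hx hxr v hv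
    have hsup : ∀ y ∈ (w1.append w2.reverse).support, y ∈ {y : V | y ≠ x} := by
      intro y hy
      rw [SimpleGraph.Walk.mem_support_append_iff] at hy
      rcases hy with hy | hy
      · exact h1 y hy
      · rw [SimpleGraph.Walk.support_reverse, List.mem_reverse] at hy
        exact h2 y hy
    exact reach_induce (w1.append w2.reverse) hsup hu hv
  · exact ⟨⟨r, hxr⟩⟩

/-- four distinct members contradict `ncard ≤ 3`. -/
lemma ncard_four {α : Type*} [Finite α] {S : Set α} (hS : S.ncard ≤ 3) {a b c d : α}
    (ha : a ∈ S) (hb : b ∈ S) (hc : c ∈ S) (hd : d ∈ S)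
    (hab : a ≠ b) (hac : a ≠ c) (had : a ≠ d) (hbc : b ≠ c) (hbd : b ≠ d) (hcd : c ≠ d) :
    False := by
  have hsub : ({a, b, c, d} : Set α) ⊆ S := by
    intro z hz
    rcases hz with rfl | rfl | rfl | rfl
    exacts [ha, hb, hc, hd]
  have h4 : ({a, b, c, d} : Set α).ncard = 4 := by
    rw [Set.ncard_insert_of_notMem (by simp [hab, hac, had]) (Set.toFinite _),
      Set.ncard_insert_of_notMem (by simp [hbc, hbd]) (Set.toFinite _),
      Set.ncard_insert_of_notMem (by simp [hcd]) (Set.toFinite _),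
      Set.ncard_singleton]
  have := Set.ncard_le_ncard hsub (Set.toFinite S)
  omega

/-- vertices in two distinct triangles are pairwise adjacent. -/
lemma Mclique [Finite V] {G : SimpleGraph V}
    (htri : {s : Finset V | G.IsNClique 3 s}.ncard ≤ 3) {u v : V}
    (hu : ∃ T1 T2 : Finset V, G.IsNClique 3 T1 ∧ G.IsNClique 3 T2 ∧ T1 ≠ T2 ∧ u ∈ T1 ∧ u ∈ T2)
    (hv : ∃ T1 T2 : Finset V, G.IsNClique 3 T1 ∧ G.IsNClique 3 T2 ∧ T1 ≠ T2 ∧ v ∈ T1 ∧ v ∈ T2)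
    (huv : u ≠ v) : G.Adj u v := by
  haveI : Fintype V := Fintype.ofFinite V
  haveI := Classical.decEq V
  obtain ⟨T1, T2, hT1, hT2, hT12, hu1, hu2⟩ := hu
  obtain ⟨S1, S2, hS1, hS2, hS12, hv1, hv2⟩ := hv
  have hcommon : T1 = S1 ∨ T1 = S2 ∨ T2 = S1 ∨ T2 = S2 := by
    by_contra hno
    push_neg at hno
    obtain ⟨h1, h2, h3, h4⟩ := hno
    exact ncard_four htri hT1 hT2 hS1 hS2 hT12 h1 h2 h3 h4 hS12
  have : ∃ T : Finset V, G.IsNClique 3 T ∧ u ∈ T ∧ v ∈ T := by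
    rcases hcommon with h | h | h | h
    · exact ⟨T1, hT1, hu1, h ▸ hv1⟩
    · exact ⟨T1, hT1, hu1, h ▸ hv2⟩
    · exact ⟨T2, hT2, hu2, h ▸ hv1⟩
    · exact ⟨T2, hT2, hu2, h ▸ hv2⟩
  obtain ⟨T, hT, huT, hvT⟩ := this
  exact hT.1 huT hvT huv

/-- Key lemma: a non-cutvertex lying in at most one triangle. -/
lemma KL [Fintype V] (G : SimpleGraph V) (hconn : G.Connected)
    (hcard : 1 < Fintype.card V)
    (htri : {s : Finset V | G.IsNClique 3 s}.ncard ≤ 3) :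
    ∃ x : V, (G.induce {y | y ≠ x}).Connected ∧
      ∀ T1 T2 : Finset V, G.IsNClique 3 T1 → G.IsNClique 3 T2 → x ∈ T1 → x ∈ T2 →
        T1 = T2 := by
  classical
  set M : Set V := {v | ∃ T1 T2 : Finset V, G.IsNClique 3 T1 ∧ G.IsNClique 3 T2 ∧
    T1 ≠ T2 ∧ v ∈ T1 ∧ v ∈ T2} with hM_def
  have hM1 : ∀ x, x ∉ M → ∀ T1 T2 : Finset V, G.IsNClique 3 T1 → G.IsNClique 3 T2 →
      x ∈ T1 → x ∈ T2 → T1 = T2 := by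
    intro x hx T1 T2 h1 h2 m1 m2
    by_contra hne
    exact hx ⟨T1, T2, h1, h2, hne, m1, m2⟩
  have hnever : ∀ r : V, ∃ x, (∀ u, G.dist r u ≤ G.dist r x) ∧ r ≠ x := by
    intro r
    haveI : Nonempty V := ⟨r⟩
    obtain ⟨x, hx⟩ := Finite.exists_max (G.dist r)
    refine ⟨x, hx, ?_⟩
    rintro rfl
    obtain ⟨u, hu⟩ := Fintype.exists_ne_of_one_lt_card hcard r
    have h0 : G.dist r u = 0 := by
      have := hx u
      rwa [SimpleGraph.dist_self, Nat.le_zero] at this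
    exact hu ((hconn.dist_eq_zero_iff).mp h0).symm
  by_cases hMem : ∃ m0, m0 ∈ M
  · obtain ⟨m0, hm0⟩ := hMem
    obtain ⟨x, hx, hxm0⟩ := hnever m0
    by_cases hxM : x ∈ M
    · -- x is a deepest vertex and is multi-shared: m0 has eccentricity 1
      have hadjm : G.Adj m0 x := Mclique htri hm0 hxM hxm0
      have hdist1 : ∀ u, u ≠ m0 → G.Adj m0 u := by
        intro u hu
        have h1 : G.dist m0 x = 1 := SimpleGraph.dist_eq_one_iff_adj.mpr hadjm
        have h2 : G.dist m0 u ≤ 1 := h1 ▸ hx u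
        have h3 : 0 < G.dist m0 u := hconn.pos_dist_of_ne (Ne.symm hu)
        have h4 : G.dist m0 u = 1 := by omega
        exact SimpleGraph.dist_eq_one_iff_adj.mp h4
      by_cases hy : ∃ y, y ≠ m0 ∧ y ∉ M
      · obtain ⟨y, hym0, hyM⟩ := hy
        refine ⟨y, ?_, hM1 y hyM⟩
        rw [SimpleGraph.connected_iff]
        constructor
        · rintro ⟨u, hu⟩ ⟨v, hv⟩
          have hm0mem : m0 ∈ {w : V | w ≠ y} := Ne.symm hym0
          have hstep : ∀ (z : V) (hz : z ∈ {w : V | w ≠ y}),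
              (G.induce {w : V | w ≠ y}).Reachable ⟨z, hz⟩ ⟨m0, hm0mem⟩ := by
            intro z hz
            rcases eq_or_ne z m0 with rfl | hzm
            · exact SimpleGraph.Reachable.refl _
            · refine SimpleGraph.Adj.reachable ?_
              simp only [SimpleGraph.induce, SimpleGraph.comap_adj,
                Function.Embedding.coe_subtype]
              exact (hdist1 z hzm).symm
          exact (hstep u hu).trans (hstep v hv).symm
        · exact ⟨⟨m0, Ne.symm hym0⟩⟩
      · -- contradiction: every vertex other than m0 is multi-shared
        exfalso
        push_neg at hy
        rcases lt_or_ge (Fintype.card V) 4 with hsmall | hbig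
        · -- tiny graph: two distinct 3-sets impossible
          obtain ⟨a, ham⟩ := Fintype.exists_ne_of_one_lt_card hcard m0
          obtain ⟨T1, T2, h1, h2, h12, m1, m2⟩ := hy a ham
          have hV3 : Fintype.card V = 3 := by
            have hle := Finset.card_le_univ T1
            have h13 : T1.card = 3 := h1.2
            have hcu : (Finset.univ : Finset V).card = Fintype.card V := Finset.card_univ
            omega
          have e1 : T1 = Finset.univ := Finset.eq_univ_of_card T1 (by rw [h1.2, hV3])
          have e2 : T2 = Finset.univ := Finset.eq_univ_of_card T2 (by rw [h2.2, hV3])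
          exact h12 (e1.trans e2.symm)
        · -- big graph: four triangles
          have herase : 2 < (Finset.univ.erase m0).card := by
            rw [Finset.card_erase_of_mem (Finset.mem_univ m0), Finset.card_univ]
            omega
          obtain ⟨a, b, c, ha, hb, hc, hab, hac, hbc⟩ := Finset.two_lt_card_iff.mp herase
          have ham := Finset.ne_of_mem_erase ha
          have hbm := Finset.ne_of_mem_erase hb
          have hcm := Finset.ne_of_mem_erase hc
          have haM := hy a ham
          have hbM := hy b hbm
          have hcM := hy c hcm
          have hadjab : G.Adj a b := Mclique htri haM hbM hab
          have hadjac : G.Adj a c := Mclique htri haM hcM hac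
          have hadjbc : G.Adj b c := Mclique htri hbM hcM hbc
          have hadjam : G.Adj a m0 := (hdist1 a ham).symm
          have hadjbm : G.Adj b m0 := (hdist1 b hbm).symm
          have hadjcm : G.Adj c m0 := (hdist1 c hcm).symm
          have hT1 : G.IsNClique 3 {a, b, c} :=
            SimpleGraph.is3Clique_triple_iff.mpr ⟨hadjab, hadjac, hadjbc⟩
          have hT2 : G.IsNClique 3 {a, b, m0} :=
            SimpleGraph.is3Clique_triple_iff.mpr ⟨hadjab, hadjam, hadjbm⟩
          have hT3 : G.IsNClique 3 {a, c, m0} :=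
            SimpleGraph.is3Clique_triple_iff.mpr ⟨hadjac, hadjam, hadjcm⟩
          have hT4 : G.IsNClique 3 {b, c, m0} :=
            SimpleGraph.is3Clique_triple_iff.mpr ⟨hadjbc, hadjbm, hadjcm⟩
          have hm0T1 : m0 ∉ ({a, b, c} : Finset V) := by
            simp only [Finset.mem_insert, Finset.mem_singleton]
            push_neg
            exact ⟨Ne.symm ham, Ne.symm hbm, Ne.symm hcm⟩
          have hcT2 : c ∉ ({a, b, m0} : Finset V) := by
            simp only [Finset.mem_insert, Finset.mem_singleton]
            push_neg
            exact ⟨Ne.symm hac, Ne.symm hbc, hcm⟩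
          have hbT3 : b ∉ ({a, c, m0} : Finset V) := by
            simp only [Finset.mem_insert, Finset.mem_singleton]
            push_neg
            exact ⟨Ne.symm hab, hbc, hbm⟩
          have haT4 : a ∉ ({b, c, m0} : Finset V) := by
            simp only [Finset.mem_insert, Finset.mem_singleton]
            push_neg
            exact ⟨hab, hac, ham⟩
          refine ncard_four htri hT1 hT2 hT3 hT4 ?_ ?_ ?_ ?_ ?_ ?_
          · intro h; exact hm0T1 (h ▸ (by simp : m0 ∈ ({a,b,m0} : Finset V)))
          · intro h; exact hm0T1 (h ▸ (by simp : m0 ∈ ({a,c,m0} : Finset V)))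
          · intro h; exact hm0T1 (h ▸ (by simp : m0 ∈ ({b,c,m0} : Finset V)))
          · intro h; exact hcT2 (h ▸ (by simp : c ∈ ({a,c,m0} : Finset V)))
          · intro h; exact hcT2 (h ▸ (by simp : c ∈ ({b,c,m0} : Finset V)))
          · intro h; exact haT4 (h ▸ (by simp : a ∈ ({a,c,m0} : Finset V)))
    · exact ⟨x, noncut_of_maxdist hconn hx hxm0, hM1 x hxM⟩
  · push_neg at hMem
    have hne : Nonempty V := Fintype.card_pos_iff.mp (by omega)
    obtain ⟨r⟩ := hne
    obtain ⟨x, hx, hxr⟩ := hnever r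
    exact ⟨x, noncut_of_maxdist hconn hx hxr, hM1 x (hMem x)⟩

end OrderB

universe u

lemma exists_order_aux : ∀ (n : ℕ) {W : Type u} [Fintype W] (G : SimpleGraph W),
    Fintype.card W ≤ n → G.Connected → {s : Finset W | G.IsNClique 3 s}.ncard ≤ 3 →
    ∃ (ρ : W → ℕ) (d : Finset W → W), Injective ρ ∧
      (∀ v, (∀ u, ρ u ≤ ρ v) ∨ ∃ u, G.Adj v u ∧ ρ v < ρ u) ∧
      (∀ T, G.IsNClique 3 T → d T ∈ T ∧ ∀ u ∈ T, u ≠ d T → ρ (d T) < ρ u) ∧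
      Set.InjOn d {s : Finset W | G.IsNClique 3 s} := by
  intro n
  induction n with
  | zero =>
    intro W _ G hcard hconn htri
    exfalso
    have : Nonempty W := hconn.nonempty
    have := Fintype.card_pos_iff.mpr this
    omega
  | succ n ih =>
    intro W instW G hcard hconn htri
    classical
    by_cases h1 : Fintype.card W ≤ 1
    · -- a single vertex
      have hnV : Nonempty W := hconn.nonempty
      obtain ⟨v0⟩ := hnV
      have hsing : ∀ a b : W, a = b := fun a b =>
        Fintype.card_le_one_iff.mp h1 a b
      have hnotri : ∀ T : Finset W, ¬ G.IsNClique 3 T := by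
        intro T hT
        have h3 : T.card = 3 := hT.2
        have hle := Finset.card_le_univ T
        have hcu : (Finset.univ : Finset W).card = Fintype.card W := Finset.card_univ
        omega
      refine ⟨fun _ => 0, fun _ => v0, ?_, ?_, ?_, ?_⟩
      · intro a b _; exact hsing a b
      · intro v; left; intro u; exact le_refl _
      · intro T hT; exact absurd hT (hnotri T)
      · intro T1 hT1 T2 _ _; exact absurd hT1 (hnotri T1)
    · push_neg at h1
      obtain ⟨x, hxconn, hxtri⟩ := KL G hconn h1 htri
      set s : Set W := {y | y ≠ x} with hs_def
      haveI : DecidablePred (· ∈ s) := fun _ => Classical.propDecidable _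
      have hxns : x ∉ s := by simp [hs_def]
      have hcards : Fintype.card ↥s ≤ n := by
        have hlt : Fintype.card ↥s < Fintype.card W := Fintype.card_subtype_lt hxns
        omega
      -- triangles of the induced graph inject into the triangles of G
      have hmapN : ∀ T : Finset ↥s, (G.induce s).IsNClique 3 T →
          G.IsNClique 3 (T.map (Function.Embedding.subtype _)) := by
        intro T hT
        obtain ⟨hclique, hcard3⟩ := hT
        constructor
        · intro a ha b hb hab
          rw [Finset.coe_map] at ha hb
          obtain ⟨a', ha', rfl⟩ := ha
          obtain ⟨b', hb', rfl⟩ := hb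
          have hne' : a' ≠ b' := fun h => hab (congrArg _ h)
          have := hclique ha' hb' hne'
          simpa [SimpleGraph.induce, SimpleGraph.comap_adj] using this
        · rw [Finset.card_map]; exact hcard3
      have htris : {T : Finset ↥s | (G.induce s).IsNClique 3 T}.ncard ≤ 3 := by
        refine le_trans (Set.ncard_le_ncard_of_injOn
          (fun T => T.map (Function.Embedding.subtype _)) ?_ ?_ ?_) htri
        · intro T hT; exact hmapN T hT
        · intro a _ b _ h; exact Finset.map_injective _ h
        · exact Set.toFinite _
      obtain ⟨ρ', d', hρ', hup', hd', hdinj'⟩ := ih (G.induce s) hcards hxconn htris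
      -- lift the order and designation
      set ρ : W → ℕ := fun v => if h : v = x then 0 else ρ' ⟨v, h⟩ + 1 with hρ_def
      have hρx : ρ x = 0 := by simp [hρ_def]
      have hρne : ∀ (v : W) (h : v ≠ x), ρ v = ρ' ⟨v, h⟩ + 1 := by
        intro v h; simp [hρ_def, h]
      set d : Finset W → W := fun T =>
        if h : x ∈ T then x else ↑(d' (T.subtype (· ∈ s))) with hd_def
      -- the induced triangle attached to a triangle avoiding x
      have hsubN : ∀ T : Finset W, G.IsNClique 3 T → x ∉ T →
          (G.induce s).IsNClique 3 (T.subtype (· ∈ s)) := by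
        intro T hT hxT
        have hall : ∀ y ∈ T, y ∈ s := by
          intro y hy
          simp only [hs_def, Set.mem_setOf_eq]
          rintro rfl
          exact hxT hy
        constructor
        · rintro ⟨a, has⟩ ha ⟨b, hbs⟩ hb hab
          rw [Finset.mem_coe, Finset.mem_subtype] at ha hb
          have hne' : a ≠ b := fun h => hab (Subtype.ext h)
          have := hT.1 ha hb hne'
          simp only [SimpleGraph.induce, SimpleGraph.comap_adj,
            Function.Embedding.coe_subtype]
          exact this
        · have := Finset.subtype_map_of_mem hall
          have hc := congrArg Finset.card this
          rw [Finset.card_map] at hc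
          rw [hc]; exact hT.2
      have hdspec : ∀ T : Finset W, G.IsNClique 3 T → x ∉ T →
          d T = ↑(d' (T.subtype (· ∈ s))) ∧ d T ≠ x := by
        intro T hT hxT
        constructor
        · simp [hd_def, hxT]
        · simp only [hd_def, dif_neg hxT]
          exact (d' (T.subtype (· ∈ s))).2
      refine ⟨ρ, d, ?_, ?_, ?_, ?_⟩
      · -- injectivity
        intro a b heq
        by_cases ha : a = x <;> by_cases hb : b = x
        · rw [ha, hb]
        · rw [hρne b hb] at heq; rw [ha, hρx] at heq; omega
        · rw [hρne a ha] at heq; rw [hb, hρx] at heq; omega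
        · rw [hρne a ha, hρne b hb] at heq
          have := hρ' (a₁ := ⟨a, ha⟩) (a₂ := ⟨b, hb⟩) (by omega)
          exact congrArg Subtype.val this
      · -- upward neighbors
        intro v
        by_cases hv : v = x
        · subst hv
          right
          obtain ⟨u, hu⟩ := Fintype.exists_ne_of_one_lt_card h1 v
          have hreach : G.Reachable v u := hconn v u
          obtain ⟨w⟩ := hreach
          cases w with
          | nil => exact absurd rfl hu
          | @cons _ b _ hadj p =>
            refine ⟨b, hadj, ?_⟩
            have hbx : b ≠ v := fun h => G.irrefl (h ▸ hadj)
            rw [hρx, hρne b hbx]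
            omega
        · rcases hup' ⟨v, hv⟩ with htop | ⟨u', hadj', hlt'⟩
          · left
            intro u
            by_cases hu : u = x
            · rw [hu, hρx]; omega
            · rw [hρne u hu, hρne v hv]
              have := htop ⟨u, hu⟩
              omega
          · right
            refine ⟨u'.1, ?_, ?_⟩
            · have := hadj'
              simpa [SimpleGraph.induce, SimpleGraph.comap_adj] using this
            · rw [hρne v hv, hρne u'.1 u'.2]
              have : ρ' ⟨u'.1, u'.2⟩ = ρ' u' := congrArg ρ' (Subtype.ext rfl)
              omega
      · -- designation
        intro T hT
        by_cases hxT : x ∈ T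
        · constructor
          · simp [hd_def, hxT]
          · intro u hu hune
            have hdTx : d T = x := by simp [hd_def, hxT]
            rw [hdTx, hρx]
            rw [hdTx] at hune
            rw [hρne u hune]
            omega
        · obtain ⟨hdT, hdTx⟩ := hdspec T hT hxT
          have hT' := hsubN T hT hxT
          have hmem' := (hd' _ hT').1
          rw [Finset.mem_subtype] at hmem'
          constructor
          · rw [hdT]; exact hmem'
          · intro u hu hune
            have hux : u ≠ x := fun h => hxT (h ▸ hu)
            have hune' : (⟨u, hux⟩ : ↥s) ≠ d' (T.subtype (· ∈ s)) := by
              intro h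
              apply hune
              rw [hdT, ← h]
            have hu' : (⟨u, hux⟩ : ↥s) ∈ T.subtype (· ∈ s) := by
              rw [Finset.mem_subtype]; exact hu
            have hlt' := (hd' _ hT').2 ⟨u, hux⟩ hu' hune'
            have h6 : ρ (d T) = ρ' (d' (T.subtype (· ∈ s))) + 1 := by
              rw [hρne _ hdTx]
              congr 1
              apply congrArg
              exact Subtype.ext hdT
            rw [hρne u hux, h6]
            omega
      · -- injectivity of the designation
        intro T1 hT1 T2 hT2 heq
        simp only [Set.mem_setOf_eq] at hT1 hT2
        by_cases h1T : x ∈ T1 <;> by_cases h2T : x ∈ T2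
        · exact hxtri T1 T2 hT1 hT2 h1T h2T
        · exfalso
          obtain ⟨hdT2, hdT2x⟩ := hdspec T2 hT2 h2T
          have h7 : d T1 = x := by simp [hd_def, h1T]
          rw [heq] at h7
          exact hdT2x h7
        · exfalso
          obtain ⟨hdT1, hdT1x⟩ := hdspec T1 hT1 h1T
          have : d T2 = x := by simp [hd_def, h2T]
          rw [heq, this] at hdT1x
          exact hdT1x rfl
        · obtain ⟨hdT1, hdT1x⟩ := hdspec T1 hT1 h1T
          obtain ⟨hdT2, hdT2x⟩ := hdspec T2 hT2 h2T
          have hsub : d' (T1.subtype (· ∈ s)) = d' (T2.subtype (· ∈ s)) := by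
            apply Subtype.ext
            rw [← hdT1, ← hdT2, heq]
          have hT1' := hsubN T1 hT1 h1T
          have hT2' := hsubN T2 hT2 h2T
          have := hdinj' hT1' hT2' hsub
          have hall1 : ∀ y ∈ T1, y ∈ s := by
            intro y hy
            simp only [hs_def, Set.mem_setOf_eq]
            rintro rfl; exact h1T hy
          have hall2 : ∀ y ∈ T2, y ∈ s := by
            intro y hy
            simp only [hs_def, Set.mem_setOf_eq]
            rintro rfl; exact h2T hy
          calc T1 = (T1.subtype (· ∈ s)).map (Function.Embedding.subtype _) :=
                (Finset.subtype_map_of_mem hall1).symm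
            _ = (T2.subtype (· ∈ s)).map (Function.Embedding.subtype _) := by rw [this]
            _ = T2 := Finset.subtype_map_of_mem hall2

/-- Lemma B: ordering with designation of triangles. -/
lemma exists_order [Fintype V] (G : SimpleGraph V) (hconn : G.Connected)
    (htri : {s : Finset V | G.IsNClique 3 s}.ncard ≤ 3) :
    ∃ (ρ : V → ℕ) (d : Finset V → V), Injective ρ ∧
      (∀ v, (∀ u, ρ u ≤ ρ v) ∨ ∃ u, G.Adj v u ∧ ρ v < ρ u) ∧
      (∀ T, G.IsNClique 3 T → d T ∈ T ∧ ∀ u ∈ T, u ≠ d T → ρ (d T) < ρ u) ∧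
      Set.InjOn d {s : Finset V | G.IsNClique 3 s} :=
  exists_order_aux (Fintype.card V) G le_rfl hconn htri

/-- a length-3 cycle is a triangle. -/
lemma tri_of_len3 {G : SimpleGraph V} {v : V} {w : G.Walk v v} (hc : w.IsCycle)
    (hl : w.length = 3) :
    ∃ a b : V, G.Adj v a ∧ G.Adj a b ∧ G.Adj b v ∧
      (∀ e ∈ w.edges, e = s(v,a) ∨ e = s(a,b) ∨ e = s(b,v)) := by
  clear hc
  cases w with
  | nil => simp at hl
  | cons h1 w1 =>
    cases w1 with
    | nil => simp at hl
    | cons h2 w2 =>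
      cases w2 with
      | nil => simp at hl
      | cons h3 w3 =>
        cases w3 with
        | nil =>
          refine ⟨_, _, h1, h2, h3, ?_⟩
          intro e he
          simp only [SimpleGraph.Walk.edges_cons, SimpleGraph.Walk.edges_nil,
            List.mem_cons, List.not_mem_nil, or_false] at he
          tauto
        | cons h4 w4 =>
          simp only [SimpleGraph.Walk.length_cons] at hl
          omega


lemma adj_of_mem_edge {G : SimpleGraph V} {e : Sym2 V} (he : e ∈ G.edgeSet) {a b : V}
    (ha : a ∈ e) (hb : b ∈ e) (hab : a ≠ b) : G.Adj a b := by
  induction e using Sym2.ind with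
  | _ x y =>
    have hxy : G.Adj x y := he
    rw [Sym2.mem_iff] at ha hb
    rcases ha with rfl | rfl <;> rcases hb with rfl | rfl
    · exact absurd rfl hab
    · exact hxy
    · exact hxy.symm
    · exact absurd rfl hab

end Stmt13

open Stmt13 Classical Function

/-- If a connected graph `G` has at most three triangles, then
`k(G) ≤ dim H(G) + 1`. -/
theorem stmt13 {V : Type*} [Fintype V] (G : SimpleGraph V)
    (hconn : G.Connected) (htri : {s : Finset V | G.IsNClique 3 s}.ncard ≤ 3) :
    competitionNumber G ≤ holeDim G + 1 := by
  classical
  obtain ⟨ρ, d, hρ, hup, hd, hdinj⟩ := exists_order G hconn htri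
  -- the chain cliques
  set c : V → Finset V := fun v =>
    if h : ∃ T, G.IsNClique 3 T ∧ d T = v then h.choose
    else if h2 : ∃ u, G.Adj v u ∧ ρ v < ρ u then {v, h2.choose} else {v} with hc_def
  have hcspec : ∀ v, (∃ T, G.IsNClique 3 T ∧ d T = v ∧ c v = T) ∨
      ((¬ ∃ T, G.IsNClique 3 T ∧ d T = v) ∧
        ((∃ u, G.Adj v u ∧ ρ v < ρ u ∧ c v = {v, u}) ∨
          ((¬ ∃ u, G.Adj v u ∧ ρ v < ρ u) ∧ c v = {v}))) := by
    intro v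
    by_cases h : ∃ T, G.IsNClique 3 T ∧ d T = v
    · left
      refine ⟨h.choose, h.choose_spec.1, h.choose_spec.2, ?_⟩
      simp only [hc_def, dif_pos h]
    · right
      refine ⟨h, ?_⟩
      by_cases h2 : ∃ u, G.Adj v u ∧ ρ v < ρ u
      · left
        exact ⟨h2.choose, h2.choose_spec.1, h2.choose_spec.2,
          by simp only [hc_def, dif_pos h2, dif_neg h]⟩
      · right; exact ⟨h2, by simp only [hc_def, dif_neg h, dif_neg h2]⟩
  have hc1 : ∀ v, v ∈ c v := by
    intro v
    rcases hcspec v with ⟨T, hT, hdT, hcv⟩ | ⟨_, ⟨u, _, _, hcv⟩ | ⟨_, hcv⟩⟩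
    · rw [hcv, ← hdT]; exact (hd T hT).1
    · rw [hcv]; simp
    · rw [hcv]; simp
  have hc2 : ∀ v a b, a ∈ c v → b ∈ c v → a ≠ b → G.Adj a b := by
    intro v a b ha hb hab
    rcases hcspec v with ⟨T, hT, hdT, hcv⟩ | ⟨_, ⟨u, hadj, _, hcv⟩ | ⟨_, hcv⟩⟩
    · rw [hcv] at ha hb; exact hT.1 ha hb hab
    · rw [hcv] at ha hb
      simp only [Finset.mem_insert, Finset.mem_singleton] at ha hb
      rcases ha with rfl | rfl <;> rcases hb with rfl | rfl
      · exact absurd rfl hab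
      · exact hadj
      · exact hadj.symm
      · exact absurd rfl hab
    · rw [hcv] at ha hb
      simp only [Finset.mem_singleton] at ha hb
      subst ha; subst hb; exact absurd rfl hab
  have hc3 : ∀ v u, u ∈ c v → ρ v ≤ ρ u := by
    intro v u hu
    rcases hcspec v with ⟨T, hT, hdT, hcv⟩ | ⟨_, ⟨w, hadj, hlt, hcv⟩ | ⟨_, hcv⟩⟩
    · rw [hcv] at hu
      rcases eq_or_ne u v with rfl | hne
      · exact le_refl _
      · subst hdT
        exact le_of_lt ((hd T hT).2 u hu hne)
    · rw [hcv] at hu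
      simp only [Finset.mem_insert, Finset.mem_singleton] at hu
      rcases hu with rfl | rfl
      · exact le_refl _
      · exact le_of_lt hlt
    · rw [hcv] at hu
      simp only [Finset.mem_singleton] at hu
      subst hu; exact le_refl _
  -- covered edges
  set covered : Set (Sym2 V) := {e | ∃ w a b, a ∈ c w ∧ b ∈ c w ∧ a ≠ b ∧ e = s(a,b)}
    with hcovered_def
  -- triangles are covered
  have htricov : ∀ T, G.IsNClique 3 T → ∀ a ∈ T, ∀ b ∈ T, a ≠ b → s(a,b) ∈ covered := by
    intro T hT a ha b hb hab
    have hcdT : c (d T) = T := by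
      rcases hcspec (d T) with ⟨T', hT', hdT', hcv⟩ | ⟨hn, _⟩
      · rwa [hdinj hT' hT hdT'] at hcv
      · exact absurd ⟨T, hT, rfl⟩ hn
    exact ⟨d T, a, b, by rw [hcdT]; exact ha, by rw [hcdT]; exact hb, hab, rfl⟩
  -- each vertex can step upward along a covered edge
  have hstep : ∀ v, (∀ u, ρ u ≤ ρ v) ∨
      ∃ u, G.Adj v u ∧ ρ v < ρ u ∧ s(v,u) ∈ covered := by
    intro v
    rcases hcspec v with ⟨T, hT, hdT, hcv⟩ | ⟨_, ⟨u, hadj, hlt, hcv⟩ | ⟨hn, _⟩⟩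
    · right
      subst hdT
      have hcard : 1 < T.card := by rw [hT.2]; norm_num
      obtain ⟨u, hu, hne⟩ := Finset.exists_mem_ne hcard (d T)
      refine ⟨u, ?_, (hd T hT).2 u hu hne,
        htricov T hT (d T) (hd T hT).1 u hu (fun h => hne h.symm)⟩
      exact hT.1 (hd T hT).1 hu (fun h => hne h.symm)
    · right
      refine ⟨u, hadj, hlt, ⟨v, v, u, ?_, ?_, hadj.ne, rfl⟩⟩
      · rw [hcv]; simp
      · rw [hcv]; simp
    · left
      rcases hup v with h | h
      · exact h
      · exact absurd h hn
  -- the top vertex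
  have : Nonempty V := hconn.nonempty
  obtain ⟨tv, htv⟩ := Finite.exists_max ρ
  -- walk from any vertex up to the top along covered edges
  have hwalk : ∀ v, ∃ w : G.Walk v tv, ∀ e ∈ w.edges, e ∈ covered := by
    have key : ∀ n v, ρ tv - ρ v = n → ∃ w : G.Walk v tv, ∀ e ∈ w.edges, e ∈ covered := by
      intro n
      induction n using Nat.strong_induction_on with
      | _ n ih =>
        intro v hn
        rcases hstep v with htop | ⟨u, hadj, hlt, hcov⟩
        · have hveq : v = tv := hρ (le_antisymm (htv v) (htop tv))
          subst hveq
          exact ⟨SimpleGraph.Walk.nil, by simp⟩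
        · have h1 : ρ u ≤ ρ tv := htv u
          have h2 : ρ tv - ρ u < n := by omega
          obtain ⟨w, hw⟩ := ih _ h2 u rfl
          refine ⟨SimpleGraph.Walk.cons hadj w, ?_⟩
          intro e he
          rw [SimpleGraph.Walk.edges_cons, List.mem_cons] at he
          rcases he with rfl | he
          · exact hcov
          · exact hw e he
    intro v; exact key _ v rfl
  -- a good cycle through each uncovered edge
  have hcyc : ∀ e : Sym2 V, e ∈ G.edgeSet → e ∉ covered →
      ∃ (y : V) (w : G.Walk y y), w.IsCycle ∧ e ∈ w.edges ∧
        ∀ e' ∈ w.edges, e' = e ∨ e' ∈ covered := by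
    intro e
    induction e using Sym2.ind with
    | _ x y =>
      intro he hun
      have hadj : G.Adj x y := he
      obtain ⟨wx, hwx⟩ := hwalk x
      obtain ⟨wy, hwy⟩ := hwalk y
      set p0 : G.Walk x y := wx.append wy.reverse with hp0
      set P : G.Path x y := p0.toPath with hP
      have hPe : ∀ e' ∈ (P : G.Walk x y).edges, e' ∈ covered := by
        intro e' h'
        have h'' : e' ∈ p0.edges := SimpleGraph.Walk.edges_toPath_subset p0 h'
        rw [hp0, SimpleGraph.Walk.edges_append, List.mem_append] at h''
        rcases h'' with h'' | h''
        · exact hwx e' h''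
        · rw [SimpleGraph.Walk.edges_reverse, List.mem_reverse] at h''
          exact hwy e' h''
      have hnotin : s(y,x) ∉ (P : G.Walk x y).edges := by
        intro h
        exact hun (by rw [Sym2.eq_swap]; exact hPe _ h)
      refine ⟨y, SimpleGraph.Walk.cons hadj.symm (P : G.Walk x y), ?_, ?_, ?_⟩
      · exact (SimpleGraph.Walk.cons_isCycle_iff _ _).mpr ⟨P.2, hnotin⟩
      · rw [SimpleGraph.Walk.edges_cons]
        have hsw : s(x,y) = s(y,x) := Sym2.eq_swap
        rw [hsw]
        exact List.mem_cons_self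
      · intro e' h'
        rw [SimpleGraph.Walk.edges_cons, List.mem_cons] at h'
        rcases h' with rfl | h'
        · left; exact Sym2.eq_swap
        · right; exact hPe _ h'
  -- the uncovered edges
  haveI : Finite ↥G.edgeSet := Subtype.finite
  haveI : Fintype ↥G.edgeSet := Fintype.ofFinite _
  set U : Finset ↥G.edgeSet := Finset.univ.filter (fun e => (e : Sym2 V) ∉ covered) with hU
  set m : ℕ := U.card with hm
  have hUmem : ∀ u : ↥U, (u.1 : Sym2 V) ∉ covered := by
    intro u
    have hu2 := u.2
    simp only [hU, Finset.mem_filter, Finset.mem_univ, true_and] at hu2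
    exact hu2
  -- apply Lemma A
  have hkm : competitionNumber G ≤ m + 1 := by
    apply lemA G ρ hρ c hc1 hc2 hc3
      (Ex := fun j => Finset.univ.filter (fun x => x ∈ ((U.equivFin.symm j : ↥U) : ↥G.edgeSet).1))
    · intro j a b ha hb hab
      simp only [Finset.mem_filter, Finset.mem_univ, true_and] at ha hb
      exact adj_of_mem_edge ((U.equivFin.symm j : ↥U) : ↥G.edgeSet).2 ha hb hab
    · intro a b hab
      by_cases hcv : s(a,b) ∈ covered
      · left
        obtain ⟨w, a', b', ha', hb', hne, heq⟩ := hcv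
        rw [Sym2.eq_iff] at heq
        rcases heq with ⟨rfl, rfl⟩ | ⟨rfl, rfl⟩
        · exact ⟨w, ha', hb'⟩
        · exact ⟨w, hb', ha'⟩
      · right
        have hmem : (⟨s(a,b), hab⟩ : ↥G.edgeSet) ∈ U := by
          rw [hU, Finset.mem_filter]; exact ⟨Finset.mem_univ _, hcv⟩
        refine ⟨U.equivFin ⟨_, hmem⟩, ?_, ?_⟩ <;>
        · simp only [Finset.mem_filter, Finset.mem_univ, true_and, Equiv.symm_apply_apply]
          simp [Sym2.mem_iff]
  -- now the linear algebra: m ≤ holeDim G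
  have hcycU : ∀ u : ↥U, ∃ (y : V) (w : G.Walk y y), w.IsCycle ∧ (u.1 : Sym2 V) ∈ w.edges ∧
      ∀ e' ∈ w.edges, e' = (u.1 : Sym2 V) ∨ e' ∈ covered :=
    fun u => hcyc u.1.1 u.1.2 (hUmem u)
  choose yy ww hcyc1 hcyc2 hcyc3 using hcycU
  set φ : ↥U → (G.edgeSet → ZMod 2) := fun u => cycleVec G (ww u) with hφ
  have hφmem : ∀ u, φ u ∈ holeSpace G ⊔ triSpace G := fun u => cycle_mem_span G _ _ (hcyc1 u)
  -- coordinates of φ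
  have hφcoord : ∀ u u' : ↥U, φ u (u'.1) = if u' = u then 1 else 0 := by
    intro u u'
    rw [hφ]
    simp only [cycleVec]
    rcases eq_or_ne u' u with rfl | hne
    · rw [if_pos (hcyc2 u'), if_pos rfl]
    · rw [if_neg, if_neg hne]
      intro hmem
      rcases hcyc3 u _ hmem with heq | hcov
      · exact hne (Subtype.ext (Subtype.ext heq))
      · exact hUmem u' hcov
  -- triangle space vanishes on uncovered coordinates
  have htriv : ∀ u : ↥U, ∀ f ∈ triSpace G, f u.1 = 0 := by
    intro u f hf
    have hle : triSpace G ≤ LinearMap.ker (LinearMap.proj (R := ZMod 2)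
        (φ := fun _ : ↥G.edgeSet => ZMod 2) u.1) := by
      rw [triSpace, Submodule.span_le]
      rintro g ⟨v, w, hwc, hwl, rfl⟩
      obtain ⟨a, b, hva, hab, hbv, hedges⟩ := tri_of_len3 hwc hwl
      have hT : G.IsNClique 3 {v, a, b} := by
        constructor
        · intro x hx y hy hxy
          simp only [Finset.coe_insert, Set.mem_insert_iff, Finset.coe_singleton,
            Finset.mem_singleton, Finset.mem_insert, Finset.mem_coe] at hx hy
          rcases hx with rfl | rfl | rfl <;> rcases hy with rfl | rfl | rfl <;>
            first
              | exact absurd rfl hxy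
              | assumption
              | exact hva.symm
              | exact hab.symm
              | exact hbv.symm
              | exact (hbv.symm).symm
        · rw [Finset.card_insert_of_notMem, Finset.card_insert_of_notMem,
            Finset.card_singleton]
          · simp only [Finset.mem_singleton]; exact hab.ne
          · simp only [Finset.mem_insert, Finset.mem_singleton]
            push_neg
            exact ⟨hva.ne, hbv.ne.symm⟩
      simp only [SetLike.mem_coe, LinearMap.mem_ker, LinearMap.proj_apply]
      simp only [cycleVec]
      rw [if_neg]
      intro hmem
      apply hUmem u
      rcases hedges _ hmem with heq | heq | heq <;> rw [heq]
      · exact htricov _ hT v (by simp) a (by simp) hva.ne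
      · exact htricov _ hT a (by simp) b (by simp) hab.ne
      · exact htricov _ hT b (by simp) v (by simp) hbv.ne
    exact hle hf
  -- independence of the quotient vectors
  set Q := (G.edgeSet → ZMod 2) ⧸ triSpace G with hQ
  set mkQ : (G.edgeSet → ZMod 2) →ₗ[ZMod 2] Q := (triSpace G).mkQ with hmkQ
  have hindep : LinearIndependent (ZMod 2) (fun u : ↥U => mkQ (φ u)) := by
    rw [Fintype.linearIndependent_iff]
    intro g hg u0
    have hsum : mkQ (∑ u : ↥U, g u • φ u) = 0 := by
      rw [map_sum]
      simpa using hg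
    rw [hmkQ, Submodule.mkQ_apply, Submodule.Quotient.mk_eq_zero] at hsum
    have := htriv u0 _ hsum
    simp only [Finset.sum_apply, Pi.smul_apply, smul_eq_mul] at this
    rw [Finset.sum_eq_single u0] at this
    · rw [hφcoord u0 u0, if_pos rfl, mul_one] at this
      exact this
    · intro b _ hb
      rw [hφcoord b u0, if_neg (fun h => hb (Eq.symm h)), mul_zero]
    · intro h; exact absurd (Finset.mem_univ u0) h
  -- the quotient vectors live in the image of the hole space
  set M' : Submodule (ZMod 2) Q := (holeSpace G).map mkQ with hM'
  have hφQ : ∀ u : ↥U, mkQ (φ u) ∈ M' := by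
    intro u
    obtain ⟨h, hh, t, ht, hsum⟩ := Submodule.mem_sup.mp (hφmem u)
    refine ⟨h, hh, ?_⟩
    have : mkQ t = 0 := by
      rw [hmkQ, Submodule.mkQ_apply, Submodule.Quotient.mk_eq_zero]; exact ht
    rw [← hsum, map_add, this, add_zero]
  set ψ : ↥U → ↥M' := fun u => ⟨mkQ (φ u), hφQ u⟩ with hψ
  have hψindep : LinearIndependent (ZMod 2) ψ := by
    apply LinearIndependent.of_comp M'.subtype
    exact hindep
  haveI : Module.Finite (ZMod 2) (G.edgeSet → ZMod 2) := Module.Finite.pi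
  have hcard : Fintype.card ↥U ≤ Module.finrank (ZMod 2) M' :=
    hψindep.fintype_card_le_finrank
  have hrk : Module.finrank (ZMod 2) M' ≤ holeDim G := by
    rw [hM', holeDim]
    exact Submodule.finrank_map_le mkQ (holeSpace G)
  have hmh : m ≤ holeDim G := by
    rw [hm, ← Fintype.card_coe U]
    exact le_trans hcard hrk
  omega
end

section
/- Let G be a connected graph with at most three triangles that has at least one triangle, and let H be the subgraph of G induced by the edges of the triangles of G. Then H is chordal. -/
open SimpleGraph

/-- The subgraph of `G` induced by the edges of the triangles of `G`: its edges
are exactly the edges of `G` lying on some triangle. -/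
def triangleEdgeSubgraph {V : Type*} (G : SimpleGraph V) : SimpleGraph V where
  Adj x y := G.Adj x y ∧ ∃ z : V, G.Adj x z ∧ G.Adj y z
  symm := by
    constructor
    rintro x y ⟨hxy, z, hxz, hyz⟩
    exact ⟨hxy.symm, z, hyz, hxz⟩
  loopless := by
    constructor
    rintro x ⟨hxx, -⟩
    exact G.irrefl hxx


section Aux
variable {V : Type*} {H : SimpleGraph V}

private lemma darts_fst_mem (S : Set V) :
    ∀ {u v : V} (p : H.Walk u v), u ∈ S →
    (∀ d ∈ p.darts, d.fst ∈ S → d.snd ∈ S) → ∀ d ∈ p.darts, d.fst ∈ S := by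
  intro u v p
  induction p with
  | nil => simp
  | @cons u x v h q ih =>
    intro hu hclose d hd
    rw [Walk.darts_cons, List.mem_cons] at hd
    rcases hd with rfl | hd
    · exact hu
    · have hx : x ∈ S := hclose ⟨(u, x), h⟩ (by simp) hu
      exact ih hx (fun d hd => hclose d (by simp [hd])) d hd

private lemma cycle_length_le_three {v a b c : V}
    {w : H.Walk v v} (hw : w.IsCycle) (hab : a ≠ b) (hbc : b ≠ c) (hac : a ≠ c)
    (h1 : s(a,b) ∈ w.edges) (h2 : s(b,c) ∈ w.edges) (h3 : s(a,c) ∈ w.edges) :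
    w.length ≤ 3 := by
  classical
  have ha : a ∈ w.support := w.fst_mem_support_of_mem_edges h1
  have hcyc : (w.rotate a ha).IsCycle := hw.rotate ha
  have hperm : List.Perm (w.rotate a ha).edges w.edges := (w.rotate_edges a ha).perm
  have hlen : (w.rotate a ha).length = w.length := by
    rw [← Walk.length_edges, ← Walk.length_edges]; exact hperm.length_eq
  set w' := w.rotate a ha with hw'def
  rw [← hlen]
  have h1' : s(a,b) ∈ w'.edges := hperm.mem_iff.2 h1
  have h2' : s(b,c) ∈ w'.edges := hperm.mem_iff.2 h2
  have h3' : s(a,c) ∈ w'.edges := hperm.mem_iff.2 h3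
  -- snd-injectivity on darts
  have hsndnodup : (w'.darts.map (·.snd)).Nodup := by
    rw [Walk.map_snd_darts]; exact hcyc.support_nodup
  have hsnd : ∀ d1 ∈ w'.darts, ∀ d2 ∈ w'.darts, d1.snd = d2.snd → d1 = d2 :=
    List.inj_on_of_nodup_map hsndnodup
  -- fst-injectivity on darts
  have hfstnodup : (w'.darts.map (·.fst)).Nodup := by
    rw [Walk.map_fst_darts]
    have htail : w'.support.tail.Nodup := hcyc.support_nodup
    have hsupp : w'.support = a :: w'.support.tail := by
      rw [← Walk.support_eq_cons]
    have hne : w'.support.tail ≠ [] := by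
      intro h
      have h3l := hcyc.three_le_length
      have hls := w'.length_support
      rw [hsupp, h] at hls
      simp only [List.length_cons, List.length_nil] at hls
      omega
    have hlast : w'.support.tail.getLast hne = a := by
      rw [List.getLast_tail, Walk.getLast_support]
    rw [hsupp, List.dropLast_cons_of_ne_nil hne, List.nodup_cons]
    constructor
    · intro hmem
      have := List.dropLast_append_getLast hne
      rw [hlast] at this
      have h2 : w'.support.tail.Nodup := htail
      rw [← this, List.nodup_append] at h2
      exact h2.2.2 a hmem a (by simp) rfl
    · exact htail.sublist (List.dropLast_sublist _)
  have hfst : ∀ d1 ∈ w'.darts, ∀ d2 ∈ w'.darts, d1.fst = d2.fst → d1 = d2 :=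
    List.inj_on_of_nodup_map hfstnodup
  -- dart of an edge
  have hdart : ∀ {x y : V}, s(x,y) ∈ w'.edges → ∃ d ∈ w'.darts,
      (d.fst = x ∧ d.snd = y) ∨ (d.fst = y ∧ d.snd = x) := by
    intro x y hxy
    rw [Walk.edges, List.mem_map] at hxy
    obtain ⟨d, hd, hde⟩ := hxy
    refine ⟨d, hd, ?_⟩
    rw [Dart.edge, Sym2.eq_iff] at hde
    exact hde
  -- helper: if two edges at x, a dart with fst = x has snd one of the partners
  have hhelper : ∀ {x y z : V}, y ≠ z → s(x,y) ∈ w'.edges → s(x,z) ∈ w'.edges →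
      ∀ d ∈ w'.darts, d.fst = x → d.snd = y ∨ d.snd = z := by
    intro x y z hyz hxy hxz d hd hdx
    obtain ⟨dy, hdy, hy⟩ := hdart hxy
    obtain ⟨dz, hdz, hz⟩ := hdart hxz
    rcases hy with ⟨hy1, hy2⟩ | ⟨hy1, hy2⟩
    · left
      have : d = dy := hfst d hd dy hdy (by rw [hdx, hy1])
      rw [this]; exact hy2
    · rcases hz with ⟨hz1, hz2⟩ | ⟨hz1, hz2⟩
      · right
        have : d = dz := hfst d hd dz hdz (by rw [hdx, hz1])
        rw [this]; exact hz2
      · exfalso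
        have : dy = dz := hsnd dy hdy dz hdz (by rw [hy2, hz2])
        apply hyz
        have h1 : dy.fst = y := hy1
        have h2 : dz.fst = z := hz1
        rw [this] at h1
        rw [h1] at h2
        exact h2
  -- all darts of w' have fst in {a, b, c}
  have hba : s(b,a) ∈ w'.edges := by rw [Sym2.eq_swap]; exact h1'
  have hca : s(c,a) ∈ w'.edges := by rw [Sym2.eq_swap]; exact h3'
  have hcb : s(c,b) ∈ w'.edges := by rw [Sym2.eq_swap]; exact h2'
  set S : Set V := {a, b, c} with hS
  have hclose : ∀ d ∈ w'.darts, d.fst ∈ S → d.snd ∈ S := by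
    intro d hd hdfst
    simp only [hS, Set.mem_insert_iff, Set.mem_singleton_iff] at hdfst ⊢
    rcases hdfst with h | h | h
    · rcases hhelper hbc h1' h3' d hd h with h' | h'
      · right; left; exact h'
      · right; right; exact h'
    · rcases hhelper hac hba h2' d hd h with h' | h'
      · left; exact h'
      · right; right; exact h'
    · rcases hhelper hab hca hcb d hd h with h' | h'
      · left; exact h'
      · right; left; exact h'
  have hall : ∀ d ∈ w'.darts, d.fst ∈ S :=
    darts_fst_mem S w' (by left; rfl) hclose
  -- darts map fst is nodup and contained in a 3-element set
  have hsub : ∀ x ∈ w'.darts.map (·.fst), x ∈ ({a, b, c} : Finset V) := by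
    intro x hx
    rw [List.mem_map] at hx
    obtain ⟨d, hd, rfl⟩ := hx
    have hm := hall d hd
    simp only [hS, Set.mem_insert_iff, Set.mem_singleton_iff] at hm
    rcases hm with h | h | h <;> simp [h]
  have hcard : (w'.darts.map (·.fst)).length ≤ ({a, b, c} : Finset V).card := by
    have h1 : (w'.darts.map (·.fst)).toFinset ⊆ ({a, b, c} : Finset V) := by
      intro x hx
      exact hsub x (List.mem_toFinset.mp hx)
    calc (w'.darts.map (·.fst)).length = (w'.darts.map (·.fst)).toFinset.card := by
          rw [List.toFinset_card_of_nodup hfstnodup]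
      _ ≤ _ := Finset.card_le_card h1
  have hcard3 : ({a, b, c} : Finset V).card ≤ 3 := by
    apply le_trans (Finset.card_insert_le _ _)
    exact Nat.succ_le_succ (le_trans (Finset.card_insert_le _ _) (by simp))
  have : w'.length = (w'.darts.map (·.fst)).length := by
    rw [List.length_map, Walk.length_darts]
  omega

end Aux

private lemma sym2_decomp {V : Type*} (e : Sym2 V) : ∃ x y, e = s(x, y) :=
  Sym2.ind (fun x y => ⟨x, y, rfl⟩) e

theorem stmt14' {V : Type*} [Fintype V] (G : SimpleGraph V)
    (htri : {s : Finset V | G.IsNClique 3 s}.ncard ≤ 3) :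
    ∀ (v : V) (w : (triangleEdgeSubgraph G).Walk v v),
      ¬ (w.IsCycle ∧ 4 ≤ w.length ∧
        ∀ x y : V, x ∈ w.support → y ∈ w.support →
          (triangleEdgeSubgraph G).Adj x y → s(x, y) ∈ w.edges) := by
  classical
  rintro v w ⟨hcyc, hlen4, hind⟩
  set T : Set (Finset V) := {s : Finset V | G.IsNClique 3 s} with hT
  have hTfin : T.Finite := Set.toFinite T
  have hex' : ∀ e ∈ w.edges, ∃ t : Finset V, G.IsNClique 3 t ∧ ∀ x ∈ e, x ∈ t := by
    intro e he
    have heH : e ∈ (triangleEdgeSubgraph G).edgeSet := w.edges_subset_edgeSet he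
    obtain ⟨x, y, rfl⟩ := sym2_decomp e
    rw [SimpleGraph.mem_edgeSet] at heH
    obtain ⟨hxy, z, hxz, hyz⟩ := heH
    refine ⟨{x, y, z}, ?_, ?_⟩
    · rw [SimpleGraph.is3Clique_iff]
      exact ⟨x, y, z, hxy, hxz, hyz, rfl⟩
    · intro u hu
      rw [Sym2.mem_iff] at hu
      rcases hu with rfl | rfl <;> simp
  choose f hf1 hf2 using hex'
  set g : Sym2 V → Finset V := fun e =>
    if h : e ∈ w.edges then f e h else ∅ with hg
  have hmaps : ∀ e ∈ w.edges.toFinset, g e ∈ hTfin.toFinset := by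
    intro e he
    rw [List.mem_toFinset] at he
    rw [hg]
    simp only [dif_pos he]
    rw [Set.Finite.mem_toFinset]
    exact hf1 e he
  have hcards : hTfin.toFinset.card < w.edges.toFinset.card := by
    have h1 : w.edges.toFinset.card = w.length := by
      rw [List.toFinset_card_of_nodup hcyc.isTrail.edges_nodup, Walk.length_edges]
    rw [h1]
    have : hTfin.toFinset.card ≤ 3 := by
      rw [← Set.ncard_eq_toFinset_card _ hTfin]; exact htri
    omega
  obtain ⟨e1, he1m, e2, he2m, hne, heq⟩ :=
    Finset.exists_ne_map_eq_of_card_lt_of_maps_to hcards hmaps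
  rw [List.mem_toFinset] at he1m he2m
  set t : Finset V := g e1 with htdef
  have ht : G.IsNClique 3 t := by
    rw [htdef, hg]; simp only [dif_pos he1m]; exact hf1 e1 he1m
  have hsub1 : ∀ x ∈ e1, x ∈ t := by
    rw [htdef, hg]; simp only [dif_pos he1m]; exact hf2 e1 he1m
  have hsub2 : ∀ x ∈ e2, x ∈ t := by
    rw [heq, hg]; simp only [dif_pos he2m]; exact hf2 e2 he2m
  obtain ⟨x1, y1, rfl⟩ := sym2_decomp e1
  obtain ⟨x2, y2, rfl⟩ := sym2_decomp e2
  have hx1t : x1 ∈ t := hsub1 x1 (by simp)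
  have hy1t : y1 ∈ t := hsub1 y1 (by simp)
  have hx2t : x2 ∈ t := hsub2 x2 (by simp)
  have hy2t : y2 ∈ t := hsub2 y2 (by simp)
  have hx1y1 : x1 ≠ y1 :=
    (triangleEdgeSubgraph G).ne_of_adj (w.adj_of_mem_edges he1m)
  have hx2y2 : x2 ≠ y2 :=
    (triangleEdgeSubgraph G).ne_of_adj (w.adj_of_mem_edges he2m)
  -- key: two incident hole edges in the triangle t give a short cycle
  have key : ∀ pa pb pc : V, pa ≠ pb → pb ≠ pc → pa ≠ pc →
      pa ∈ t → pb ∈ t → pc ∈ t →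
      s(pa, pb) ∈ w.edges → s(pb, pc) ∈ w.edges → False := by
    intro pa pb pc h1 h2 h3 hta htb htc hea heb
    have hclique := ht.isClique
    have hGac : G.Adj pa pc := hclique (Finset.mem_coe.2 hta) (Finset.mem_coe.2 htc) h3
    have hGab : G.Adj pa pb := hclique (Finset.mem_coe.2 hta) (Finset.mem_coe.2 htb) h1
    have hGcb : G.Adj pc pb := hclique (Finset.mem_coe.2 htc) (Finset.mem_coe.2 htb) h2.symm
    have hH : (triangleEdgeSubgraph G).Adj pa pc := ⟨hGac, pb, hGab, hGcb⟩
    have hs1 : pa ∈ w.support := w.fst_mem_support_of_mem_edges hea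
    have hs2 : pc ∈ w.support := w.snd_mem_support_of_mem_edges heb
    have hchord := hind pa pc hs1 hs2 hH
    have := cycle_length_le_three hcyc h1 h2 h3 hea heb hchord
    omega
  have hswap1 : s(y1, x1) ∈ w.edges := by rw [Sym2.eq_swap]; exact he1m
  have hswap2 : s(y2, x2) ∈ w.edges := by rw [Sym2.eq_swap]; exact he2m
  by_cases h11 : x1 = x2
  · -- shared vertex x1 = x2
    have hyy : y1 ≠ y2 := by
      rintro rfl; exact hne (by rw [h11])
    subst h11
    exact key y1 x1 y2 (Ne.symm hx1y1) hx2y2 hyy hy1t hx1t hy2t hswap1 he2m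
  by_cases h12 : x1 = y2
  · subst h12
    have hyx : y1 ≠ x2 := by
      rintro rfl; exact hne (by rw [Sym2.eq_swap])
    exact key y1 x1 x2 (Ne.symm hx1y1) (Ne.symm hx2y2) hyx hy1t hx1t hx2t hswap1 hswap2
  by_cases h21 : y1 = x2
  · subst h21
    have hxy : x1 ≠ y2 := h12
    exact key x1 y1 y2 hx1y1 hx2y2 hxy hx1t hy1t hy2t he1m he2m
  by_cases h22 : y1 = y2
  · subst h22
    have hxx : x1 ≠ x2 := h11
    exact key x1 y1 x2 hx1y1 (Ne.symm hx2y2) hxx hx1t hy1t hx2t he1m hswap2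
  -- all four distinct: contradiction with |t| = 3
  have hsubt : ({x1, y1, x2, y2} : Finset V) ⊆ t := by
    intro u hu
    simp only [Finset.mem_insert, Finset.mem_singleton] at hu
    rcases hu with rfl | rfl | rfl | rfl <;> assumption
  have hc4 : ({x1, y1, x2, y2} : Finset V).card = 4 := by
    rw [Finset.card_insert_of_notMem (by simp [hx1y1, h11, h12]),
      Finset.card_insert_of_notMem (by simp [h21, h22]),
      Finset.card_insert_of_notMem (by simp [hx2y2]),
      Finset.card_singleton]
  have := Finset.card_le_card hsubt
  rw [hc4, ht.card_eq] at this
  omega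

/-- Let `G` be a connected graph with at most three triangles
having at least one triangle, and let `H` be the subgraph of `G` induced by the
edges of the triangles of `G`. Then `H` is chordal. -/
theorem stmt14 {V : Type*} [Fintype V] (G : SimpleGraph V)
    (hconn : G.Connected) (htri : {s : Finset V | G.IsNClique 3 s}.ncard ≤ 3)
    (hex : ∃ x y z : V, G.Adj x y ∧ G.Adj x z ∧ G.Adj y z) :
    IsChordalGraph (triangleEdgeSubgraph G) := by
  intro v w hW
  obtain ⟨h1, h2, h3⟩ := hW
  exact stmt14' G htri v w ⟨h1, h2, h3⟩
end
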